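/- arXiv:2012.08947 — 3 statements merged into one kernel-verified Lean document; each statement's English description precedes it below -/
import Mathlib

section
/- Assume p_{1,1}=0. For every s∈ℂ with |s|=1, the polynomial equation K(ηs, ηs⁻¹)=0 in the variable η has exactly two solutions in the closed unit disk; one solution is identically 0, and the other, denoted η(s), is real and lies in [−1,1]. Moreover η(1)=1, η(−1)=−1, and |η(s)|<1 for all |s|=1 with s≠±1. -/
open Complex Filter Set Topology MeasureTheory

/-- A zero-drift symmetric random walk in the quadrant with small positive jumps,
encoding hypotheses (H1)-(H4) of the paper. -/
structure QuadrantWalk where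
  /-- the transition weights `p_{k,ℓ}`, finitely supported -/
  p : ℤ × ℤ →₀ ℝ
  nonneg : ∀ kl, 0 ≤ p kl
  sum_one : ∑ kl ∈ p.support, p kl = 1
  /-- (H1) symmetry -/
  symm : ∀ k l : ℤ, p (k, l) = p (l, k)
  /-- (H2) small positive jumps -/
  small : ∀ k l : ℤ, 2 ≤ k ∨ 2 ≤ l → p (k, l) = 0
  /-- (H3) irreducibility -/
  irred : ∀ x y : ℂ,
      ‖x‖ = 1 → ‖y‖ = 1 →
      ‖∑ kl ∈ p.support, (p kl : ℂ) * x ^ kl.1 * y ^ kl.2‖ = 1 →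
      x = 1 ∧ y = 1
  /-- (H4) zero drift, first coordinate -/
  drift1 : ∑ kl ∈ p.support, (kl.1 : ℝ) * p kl = 0
  /-- (H4) zero drift, second coordinate -/
  drift2 : ∑ kl ∈ p.support, (kl.2 : ℝ) * p kl = 0

/-- The kernel `K(x,y) = xy(1 - Σ p_{k,ℓ} x^{-k} y^{-ℓ})`, written as a polynomial in
`x, y` (by (H2), on the support `k ≤ 1` and `ℓ ≤ 1`, so the exponents `1-k, 1-ℓ` are
nonnegative). -/
noncomputable def QuadrantWalk.K (w : QuadrantWalk) (x y : ℂ) : ℂ :=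
  x * y - ∑ kl ∈ w.p.support, (w.p kl : ℂ) * x ^ (1 - kl.1).toNat * y ^ (1 - kl.2).toNat

namespace S0Aux

/-- exponent of `z` in `Q`. -/
def A (kl : ℤ × ℤ) : ℕ := (1 - kl.1 - kl.2).toNat

noncomputable def Q (w : QuadrantWalk) (s z : ℂ) : ℂ :=
  ∑ kl ∈ w.p.support, (w.p kl : ℂ) * z ^ A kl * s ^ (kl.2 - kl.1)

variable {w : QuadrantWalk}

lemma support_facts (h11 : w.p (1, 1) = 0) {kl : ℤ × ℤ} (h : kl ∈ w.p.support) :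
    kl.1 ≤ 1 ∧ kl.2 ≤ 1 ∧ kl.1 + kl.2 ≤ 1 := by
  have hne : w.p kl ≠ 0 := Finsupp.mem_support_iff.1 h
  have h1 : kl.1 ≤ 1 := by
    by_contra hc
    exact hne (by rw [← Prod.mk.eta (p := kl)]; exact w.small _ _ (Or.inl (by omega)))
  have h2 : kl.2 ≤ 1 := by
    by_contra hc
    exact hne (by rw [← Prod.mk.eta (p := kl)]; exact w.small _ _ (Or.inr (by omega)))
  refine ⟨h1, h2, ?_⟩
  by_contra hc
  have : kl = (1, 1) := by
    have := Prod.mk.eta (p := kl); rw [← this]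
    have : kl.1 = 1 ∧ kl.2 = 1 := by omega
    rw [this.1, this.2]
  exact hne (this ▸ h11)

lemma A_cast (h11 : w.p (1, 1) = 0) {kl : ℤ × ℤ} (h : kl ∈ w.p.support) :
    (A kl : ℤ) = 1 - kl.1 - kl.2 := by
  obtain ⟨h1, h2, h3⟩ := support_facts h11 h
  unfold A; omega

lemma K_factor (h11 : w.p (1, 1) = 0) {s : ℂ} (hs : s ≠ 0) (z : ℂ) :
    w.K (z * s) (z * s⁻¹) = z * (z - Q w s z) := by
  unfold QuadrantWalk.K Q
  rw [mul_sub, Finset.mul_sum]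
  congr 1
  · field_simp
  apply Finset.sum_congr rfl
  intro kl hkl
  obtain ⟨h1, h2, h3⟩ := support_facts h11 hkl
  have hA : (1 - kl.1).toNat + (1 - kl.2).toNat = 1 + A kl := by unfold A; omega
  rw [mul_pow, mul_pow]
  have hzpow : z ^ (1 - kl.1).toNat * z ^ (1 - kl.2).toNat = z * z ^ A kl := by
    rw [← pow_add, hA, pow_add, pow_one]
  have hspow : s ^ (1 - kl.1).toNat * s⁻¹ ^ (1 - kl.2).toNat = s ^ (kl.2 - kl.1) := by
    have e1 : s ^ (1 - kl.1).toNat = s ^ (((1 - kl.1).toNat : ℤ)) := (zpow_natCast s _).symm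
    have e2 : s⁻¹ ^ (1 - kl.2).toNat = s ^ (-((1 - kl.2).toNat : ℤ)) := by
      rw [inv_pow, ← zpow_natCast s, ← zpow_neg]
    rw [e1, e2, ← zpow_add₀ hs]
    congr 1
    omega
  calc (w.p kl : ℂ) * (z ^ (1 - kl.1).toNat * s ^ (1 - kl.1).toNat) *
        (z ^ (1 - kl.2).toNat * s⁻¹ ^ (1 - kl.2).toNat)
      = (w.p kl : ℂ) * (z ^ (1 - kl.1).toNat * z ^ (1 - kl.2).toNat) *
        (s ^ (1 - kl.1).toNat * s⁻¹ ^ (1 - kl.2).toNat) := by ring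
    _ = z * ((w.p kl : ℂ) * z ^ A kl * s ^ (kl.2 - kl.1)) := by rw [hzpow, hspow]; ring

lemma abs_s_zpow {s : ℂ} (hs : ‖s‖ = 1) (j : ℤ) : ‖(s ^ j)‖ = 1 := by
  rw [norm_zpow, hs, one_zpow]

lemma Q_abs_le {s : ℂ} (hs : ‖s‖ = 1) {z : ℂ} (hz : ‖z‖ ≤ 1) :
    ‖(Q w s z)‖ ≤ 1 := by
  unfold Q
  calc ‖(∑ kl ∈ w.p.support, (w.p kl : ℂ) * z ^ A kl * s ^ (kl.2 - kl.1))‖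
      ≤ ∑ kl ∈ w.p.support, ‖((w.p kl : ℂ) * z ^ A kl * s ^ (kl.2 - kl.1))‖ := by
        exact norm_sum_le _ _
    _ ≤ ∑ kl ∈ w.p.support, w.p kl := by
        apply Finset.sum_le_sum
        intro kl hkl
        rw [norm_mul, norm_mul, abs_s_zpow hs, mul_one, norm_pow]
        rw [Complex.norm_real, Real.norm_eq_abs, _root_.abs_of_nonneg (w.nonneg kl)]
        nlinarith [pow_le_one₀ (norm_nonneg z) hz (n := A kl), w.nonneg kl,
          pow_nonneg (norm_nonneg z) (A kl)]
    _ = 1 := w.sum_one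

lemma conj_zpow {s : ℂ} (hs : ‖s‖ = 1) (j : ℤ) :
    (starRingEnd ℂ) (s ^ j) = s ^ (-j) := by
  have hcs : (starRingEnd ℂ) s = s⁻¹ := by
    rw [Complex.inv_def, Complex.normSq_eq_norm_sq, hs]; simp
  rw [map_zpow₀, hcs, inv_zpow, ← zpow_neg]

/-- By symmetry of `p`, `Q` at real `z` is conj-invariant. -/
lemma Q_conj {s : ℂ} (hs : ‖s‖ = 1) (t : ℝ) :
    (starRingEnd ℂ) (Q w s (t : ℂ)) = Q w s (t : ℂ) := by
  have hswap : ∀ kl : ℤ × ℤ, w.p kl.swap = w.p kl := fun kl => by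
    rw [show kl.swap = (kl.2, kl.1) from rfl, w.symm, Prod.mk.eta]
  have hmem : ∀ kl : ℤ × ℤ, kl ∈ w.p.support → kl.swap ∈ w.p.support := fun kl h => by
    simp only [Finsupp.mem_support_iff] at h ⊢; rwa [hswap]
  unfold Q
  rw [map_sum]
  refine Finset.sum_nbij' (fun kl => Prod.swap kl) (fun kl => Prod.swap kl)
    (fun kl h => hmem kl h) (fun kl h => hmem kl h)
    (fun kl _ => Prod.swap_swap kl) (fun kl _ => Prod.swap_swap kl) ?_
  intro kl _
  rw [map_mul, map_mul, conj_zpow hs, map_pow, Complex.conj_ofReal, Complex.conj_ofReal]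
  have hA : A (Prod.swap kl) = A kl := by
    simp only [A, Prod.fst_swap, Prod.snd_swap]; omega
  rw [hswap, hA]
  congr 1
  simp only [Prod.fst_swap, Prod.snd_swap]
  ring_nf

lemma sum_A_p (h11 : w.p (1, 1) = 0) : ∑ kl ∈ w.p.support, (A kl : ℝ) * w.p kl = 1 := by
  have : ∀ kl ∈ w.p.support, (A kl : ℝ) * w.p kl
      = w.p kl - (kl.1 : ℝ) * w.p kl - (kl.2 : ℝ) * w.p kl := by
    intro kl hkl
    have h := A_cast h11 hkl
    have : (A kl : ℝ) = 1 - (kl.1 : ℝ) - (kl.2 : ℝ) := by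
      exact_mod_cast congrArg (Int.cast : ℤ → ℝ) h
    rw [this]; ring
  rw [Finset.sum_congr rfl this, Finset.sum_sub_distrib, Finset.sum_sub_distrib,
    w.sum_one, w.drift1, w.drift2]
  ring

/-- the characteristic sum from (H3) -/
noncomputable def chi (w : QuadrantWalk) (x y : ℂ) : ℂ :=
  ∑ kl ∈ w.p.support, (w.p kl : ℂ) * x ^ kl.1 * y ^ kl.2

lemma exists_A_ge_two (h11 : w.p (1, 1) = 0) : ∃ kl ∈ w.p.support, 2 ≤ A kl := by
  by_contra hc
  push_neg at hc
  have hA1 : ∀ kl ∈ w.p.support, A kl = 1 := by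
    have hsum : ∑ kl ∈ w.p.support, (1 - (A kl : ℝ)) * w.p kl = 0 := by
      rw [Finset.sum_congr rfl (fun kl _ => by ring :
        ∀ kl ∈ w.p.support, (1 - (A kl : ℝ)) * w.p kl = w.p kl - (A kl : ℝ) * w.p kl),
        Finset.sum_sub_distrib, w.sum_one, sum_A_p h11]
      ring
    have hnn : ∀ kl ∈ w.p.support, 0 ≤ (1 - (A kl : ℝ)) * w.p kl := by
      intro kl hkl
      have := hc kl hkl
      have h1 : (A kl : ℝ) ≤ 1 := by exact_mod_cast Nat.lt_succ_iff.1 this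
      have := w.nonneg kl
      nlinarith
    have := (Finset.sum_eq_zero_iff_of_nonneg hnn).1 hsum
    intro kl hkl
    have hterm := this kl hkl
    have hp : w.p kl ≠ 0 := Finsupp.mem_support_iff.1 hkl
    have : (1 - (A kl : ℝ)) = 0 := by
      rcases mul_eq_zero.1 hterm with h | h
      · exact h
      · exact absurd h hp
    have : (A kl : ℝ) = 1 := by linarith
    exact_mod_cast this
  -- then k + l = 0 on the support, so chi (-1) (-1) = 1, contradicting (H3)
  have hkl0 : ∀ kl ∈ w.p.support, kl.1 + kl.2 = 0 := by
    intro kl hkl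
    have := A_cast h11 hkl
    rw [hA1 kl hkl] at this
    omega
  have hchi : chi w (-1) (-1) = 1 := by
    unfold chi
    have : ∀ kl ∈ w.p.support, (w.p kl : ℂ) * (-1) ^ kl.1 * (-1) ^ kl.2 = (w.p kl : ℂ) := by
      intro kl hkl
      have hne : (-1 : ℂ) ≠ 0 := by norm_num
      rw [mul_assoc, ← zpow_add₀ hne, hkl0 kl hkl, zpow_zero, mul_one]
    rw [Finset.sum_congr rfl this]
    exact_mod_cast congrArg (Complex.ofReal : ℝ → ℂ) w.sum_one
  have habs : ‖(∑ kl ∈ w.p.support, (w.p kl : ℂ) * (-1) ^ kl.1 * (-1) ^ kl.2)‖ = 1 := by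
    rw [show (∑ kl ∈ w.p.support, (w.p kl : ℂ) * (-1) ^ kl.1 * (-1) ^ kl.2) = chi w (-1) (-1)
      from rfl, hchi, norm_one]
  have := (w.irred (-1) (-1) (by simp) (by simp) habs).1
  norm_num at this

/-- `Q s 1` is the characteristic sum at `(s⁻¹, s)`. -/
lemma Q_one (h11 : w.p (1, 1) = 0) {s : ℂ} (hs : s ≠ 0) : Q w s 1 = chi w s⁻¹ s := by
  unfold Q chi
  apply Finset.sum_congr rfl
  intro kl hkl
  rw [one_pow, mul_one, mul_assoc]
  congr 1
  rw [inv_zpow, ← zpow_neg, ← zpow_add₀ hs]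
  congr 1
  ring

lemma neg_one_zpow_neg (j : ℤ) : ((-1 : ℂ)) ^ (-j) = (-1) ^ j := by
  rw [zpow_neg]
  refine inv_eq_of_mul_eq_one_left ?_
  rw [← mul_zpow]; norm_num

/-- `Q s (-1)` is minus the characteristic sum at `(-s⁻¹, -s)`. -/
lemma Q_neg_one (h11 : w.p (1, 1) = 0) {s : ℂ} (hs : s ≠ 0) :
    Q w s (-1) = -chi w (-s⁻¹) (-s) := by
  unfold Q chi
  rw [← Finset.sum_neg_distrib]
  apply Finset.sum_congr rfl
  intro kl hkl
  have hA := A_cast h11 hkl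
  have hm1 : (-1 : ℂ) ≠ 0 := by norm_num
  rw [show ((-1 : ℂ)) ^ A kl = (-1 : ℂ) ^ ((A kl : ℤ)) from (zpow_natCast _ _).symm, hA]
  rw [show (1 - kl.1 - kl.2) = 1 + (-kl.1) + (-kl.2) from by ring,
    zpow_add₀ hm1, zpow_add₀ hm1, zpow_one, neg_one_zpow_neg, neg_one_zpow_neg]
  rw [show kl.2 - kl.1 = (-kl.1) + kl.2 from by ring, zpow_add₀ hs]
  rw [show (-s⁻¹ : ℂ) = (-1) * s⁻¹ from by ring, show (-s : ℂ) = (-1) * s from by ring,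
    mul_zpow, mul_zpow, inv_zpow, ← zpow_neg]
  ring

lemma abs_pow_sub_pow_le {z z' : ℂ} (hz : ‖z‖ ≤ 1) (hz' : ‖z'‖ ≤ 1)
    (n : ℕ) : ‖(z ^ n - z' ^ n)‖ ≤ n * ‖(z - z')‖ := by
  induction n with
  | zero => simp
  | succ n ih =>
    have key : z ^ (n + 1) - z' ^ (n + 1) = z * (z ^ n - z' ^ n) + (z - z') * z' ^ n := by
      ring
    calc ‖(z ^ (n + 1) - z' ^ (n + 1))‖
        ≤ ‖(z * (z ^ n - z' ^ n))‖ + ‖((z - z') * z' ^ n)‖ := by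
          rw [key]; exact norm_add_le _ _
      _ ≤ ‖(z ^ n - z' ^ n)‖ + ‖(z - z')‖ := by
          rw [norm_mul, norm_mul, norm_pow]
          have h1 : ‖z‖ * ‖(z ^ n - z' ^ n)‖
              ≤ 1 * ‖(z ^ n - z' ^ n)‖ :=
            mul_le_mul_of_nonneg_right hz (norm_nonneg _)
          have h2 : ‖(z - z')‖ * ‖z'‖ ^ n
              ≤ ‖(z - z')‖ * 1 :=
            mul_le_mul_of_nonneg_left (pow_le_one₀ (norm_nonneg _) hz')
              (norm_nonneg _)
          linarith
      _ ≤ (n + 1 : ℕ) * ‖(z - z')‖ := by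
          push_cast
          linarith
  
lemma rigidity {z z' : ℂ} (hz : ‖z‖ ≤ 1) (hz' : ‖z'‖ ≤ 1)
    {n : ℕ} (hn : 2 ≤ n)
    (heq : ‖(z ^ n - z' ^ n)‖ = n * ‖(z - z')‖) : z = z' := by
  by_contra hne
  have hd : 0 < ‖(z - z')‖ := by
    rw [norm_pos_iff]
    exact sub_ne_zero.2 hne
  induction n, hn using Nat.le_induction with
  | base =>
    -- |z² - z'²| = 2|z - z'| forces |z + z'| = 2, hence z = z' : contradiction
    have hfac : z ^ 2 - z' ^ 2 = (z + z') * (z - z') := by ring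
    rw [hfac, norm_mul] at heq
    have habs : ‖(z + z')‖ = 2 := by
      have heq2 : ‖(z + z')‖ * ‖(z - z')‖
          = 2 * ‖(z - z')‖ := by exact_mod_cast heq
      exact mul_right_cancel₀ (ne_of_gt hd) heq2
    -- squared expansion
    have hsq : Complex.normSq (z + z') = Complex.normSq z + Complex.normSq z'
        + 2 * (z * (starRingEnd ℂ) z').re := Complex.normSq_add z z'
    have h4 : Complex.normSq (z + z') = 4 := by
      rw [← Complex.sq_norm, habs]; norm_num
    have hnz : Complex.normSq z ≤ 1 := by
      rw [← Complex.sq_norm]; nlinarith [norm_nonneg z]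
    have hnz' : Complex.normSq z' ≤ 1 := by
      rw [← Complex.sq_norm]; nlinarith [norm_nonneg z']
    have hre : (z * (starRingEnd ℂ) z').re ≤ ‖(z * (starRingEnd ℂ) z')‖ :=
      Complex.re_le_norm _
    have habs' : ‖(z * (starRingEnd ℂ) z')‖ ≤ 1 := by
      rw [norm_mul, Complex.norm_conj]
      nlinarith [norm_nonneg z, norm_nonneg z']
    -- all inequalities are equalities
    have hre1 : (z * (starRingEnd ℂ) z').re = 1 := by linarith
    have habs1 : ‖(z * (starRingEnd ℂ) z')‖ = 1 := by linarith
    have hw1 : z * (starRingEnd ℂ) z' = 1 := by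
      have him : (z * (starRingEnd ℂ) z').im = 0 := by
        have h := Complex.sq_norm (z * (starRingEnd ℂ) z')
        rw [habs1, Complex.normSq_apply] at h
        nlinarith [h, hre1]
      exact Complex.ext (by rw [hre1]; rfl) (by rw [him]; rfl)
    have hz'1 : Complex.normSq z' = 1 := by
      have : Complex.normSq z = 1 ∧ Complex.normSq z' = 1 := by
        constructor <;> nlinarith [hsq, h4, hre1, hnz, hnz', Complex.normSq_nonneg z,
          Complex.normSq_nonneg z']
      exact this.2
    have : z * (starRingEnd ℂ) z' = z' * (starRingEnd ℂ) z' := by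
      rw [hw1, Complex.mul_conj, hz'1]; norm_num
    have hcz' : (starRingEnd ℂ) z' ≠ 0 := by
      intro h
      rw [show z' = (starRingEnd ℂ) ((starRingEnd ℂ) z') from (Complex.conj_conj z').symm, h,
        map_zero] at hz'1
      simp [Complex.normSq] at hz'1
    exact hne (mul_right_cancel₀ hcz' this)
  | succ n hn2 ih =>
    -- from |z^{n+1} - z'^{n+1}| = (n+1)|z-z'| deduce |z^n - z'^n| = n|z-z'|
    apply ih
    have key : z ^ (n + 1) - z' ^ (n + 1) = z * (z ^ n - z' ^ n) + (z - z') * z' ^ n := by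
      ring
    have hle : ((n : ℝ) + 1) * ‖(z - z')‖
        ≤ ‖(z ^ n - z' ^ n)‖ + ‖(z - z')‖ := by
      calc ((n : ℝ) + 1) * ‖(z - z')‖ = ‖(z ^ (n+1) - z' ^ (n+1))‖ := by
            rw [heq]; push_cast; ring
        _ ≤ ‖(z * (z ^ n - z' ^ n))‖ + ‖((z - z') * z' ^ n)‖ := by
            rw [key]; exact norm_add_le _ _
        _ ≤ ‖(z ^ n - z' ^ n)‖ + ‖(z - z')‖ := by
            rw [norm_mul, norm_mul, norm_pow]
            have h1 : ‖z‖ * ‖(z ^ n - z' ^ n)‖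
                ≤ 1 * ‖(z ^ n - z' ^ n)‖ :=
              mul_le_mul_of_nonneg_right hz (norm_nonneg _)
            have h2 : ‖(z - z')‖ * ‖z'‖ ^ n
                ≤ ‖(z - z')‖ * 1 :=
              mul_le_mul_of_nonneg_left (pow_le_one₀ (norm_nonneg _) hz')
                (norm_nonneg _)
            linarith
    have hub := abs_pow_sub_pow_le hz hz' n
    linarith

lemma uniq (h11 : w.p (1, 1) = 0) {s : ℂ} (hs : ‖s‖ = 1) {z z' : ℂ}
    (hz : ‖z‖ ≤ 1) (hz' : ‖z'‖ ≤ 1)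
    (h1 : z = Q w s z) (h2 : z' = Q w s z') : z = z' := by
  by_contra hne
  set d := ‖(z - z')‖ with hdd
  have hd : 0 < d := by
    rw [hdd, norm_pos_iff]
    exact sub_ne_zero.2 hne
  have hdiff : z - z' = ∑ kl ∈ w.p.support,
      (w.p kl : ℂ) * s ^ (kl.2 - kl.1) * (z ^ A kl - z' ^ A kl) := by
    calc z - z' = Q w s z - Q w s z' := by rw [← h1, ← h2]
      _ = ∑ kl ∈ w.p.support,
          ((w.p kl : ℂ) * z ^ A kl * s ^ (kl.2 - kl.1)
            - (w.p kl : ℂ) * z' ^ A kl * s ^ (kl.2 - kl.1)) := by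
          unfold Q; rw [Finset.sum_sub_distrib]
      _ = _ := Finset.sum_congr rfl (fun kl _ => by ring)
  have h3 : d ≤ ∑ kl ∈ w.p.support, w.p kl * ‖(z ^ A kl - z' ^ A kl)‖ := by
    calc d = ‖(∑ kl ∈ w.p.support,
          (w.p kl : ℂ) * s ^ (kl.2 - kl.1) * (z ^ A kl - z' ^ A kl))‖ := by rw [hdd, hdiff]
      _ ≤ ∑ kl ∈ w.p.support,
          ‖((w.p kl : ℂ) * s ^ (kl.2 - kl.1) * (z ^ A kl - z' ^ A kl))‖ :=
        norm_sum_le _ _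
      _ = ∑ kl ∈ w.p.support, w.p kl * ‖(z ^ A kl - z' ^ A kl)‖ := by
        apply Finset.sum_congr rfl
        intro kl _
        rw [norm_mul, norm_mul, abs_s_zpow hs, mul_one, Complex.norm_real, Real.norm_eq_abs,
          _root_.abs_of_nonneg (w.nonneg kl)]
  have termle : ∀ kl ∈ w.p.support,
      w.p kl * ‖(z ^ A kl - z' ^ A kl)‖ ≤ w.p kl * ((A kl : ℝ) * d) := by
    intro kl _
    exact mul_le_mul_of_nonneg_left (abs_pow_sub_pow_le hz hz' (A kl)) (w.nonneg kl)
  have h4 : ∑ kl ∈ w.p.support, w.p kl * ((A kl : ℝ) * d) = d := by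
    calc ∑ kl ∈ w.p.support, w.p kl * ((A kl : ℝ) * d)
        = (∑ kl ∈ w.p.support, (A kl : ℝ) * w.p kl) * d := by
          rw [Finset.sum_mul]; exact Finset.sum_congr rfl (fun kl _ => by ring)
      _ = d := by rw [sum_A_p h11, one_mul]
  have hsum_eq : ∑ kl ∈ w.p.support, w.p kl * ‖(z ^ A kl - z' ^ A kl)‖
      = ∑ kl ∈ w.p.support, w.p kl * ((A kl : ℝ) * d) := by
    have hle := Finset.sum_le_sum termle
    rw [h4] at hle ⊢
    linarith
  have hterm_eq := (Finset.sum_eq_sum_iff_of_le termle).1 hsum_eq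
  obtain ⟨kl0, hkl0, hA0⟩ := exists_A_ge_two h11
  have hp0 : w.p kl0 ≠ 0 := Finsupp.mem_support_iff.1 hkl0
  have habs0 : ‖(z ^ A kl0 - z' ^ A kl0)‖ = (A kl0 : ℝ) * d := by
    have := hterm_eq kl0 hkl0
    exact mul_left_cancel₀ hp0 this
  exact hne (rigidity hz hz' hA0 habs0)

lemma exists_root (h11 : w.p (1, 1) = 0) {s : ℂ} (hs : ‖s‖ = 1) :
    ∃ t : ℝ, t ∈ Set.Icc (-1 : ℝ) 1 ∧ (t : ℂ) = Q w s (t : ℂ) := by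
  set F : ℝ → ℝ := fun t => t - (Q w s (t : ℂ)).re with hF
  have hcont : Continuous F := by
    apply continuous_id.sub
    apply Complex.continuous_re.comp
    unfold Q
    exact continuous_finset_sum _ fun kl _ =>
      (continuous_const.mul (Complex.continuous_ofReal.pow _)).mul continuous_const
  have habs1 : ∀ t : ℝ, |t| ≤ 1 → ‖(Q w s (t : ℂ))‖ ≤ 1 := fun t ht =>
    Q_abs_le hs (by rwa [Complex.norm_real, Real.norm_eq_abs])
  have hF1 : 0 ≤ F 1 := by
    have h := (_root_.abs_le.1 (Complex.abs_re_le_norm (Q w s ((1 : ℝ) : ℂ)))).2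
    have := habs1 1 (by norm_num)
    simp only [hF]
    linarith [h.trans this]
  have hFm1 : F (-1) ≤ 0 := by
    have h := (_root_.abs_le.1 (Complex.abs_re_le_norm (Q w s ((-1 : ℝ) : ℂ)))).1
    have := habs1 (-1) (by norm_num)
    simp only [hF]
    have : -‖(Q w s ((-1 : ℝ) : ℂ))‖ ≥ -1 := by linarith
    linarith
  have hmem : (0 : ℝ) ∈ Set.Icc (F (-1)) (F 1) := ⟨hFm1, hF1⟩
  have := intermediate_value_Icc (show (-1 : ℝ) ≤ 1 by norm_num) hcont.continuousOn hmem
  obtain ⟨t, ht, hFt⟩ := this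
  refine ⟨t, ht, ?_⟩
  have him : (Q w s (t : ℂ)).im = 0 := Complex.conj_eq_iff_im.1 (Q_conj hs t)
  apply Complex.ext
  · have : t - (Q w s (t : ℂ)).re = 0 := hFt
    simp only [Complex.ofReal_re]
    linarith
  · rw [him, Complex.ofReal_im]

lemma chi_one_one : chi w 1 1 = 1 := by
  unfold chi
  rw [Finset.sum_congr rfl (fun kl _ => by rw [one_zpow, one_zpow, mul_one, mul_one] :
    ∀ kl ∈ w.p.support, (w.p kl : ℂ) * (1:ℂ) ^ kl.1 * (1:ℂ) ^ kl.2 = (w.p kl : ℂ))]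
  exact_mod_cast congrArg (Complex.ofReal : ℝ → ℂ) w.sum_one

lemma Q_one_one (h11 : w.p (1, 1) = 0) : Q w (1 : ℂ) 1 = 1 := by
  rw [Q_one h11 one_ne_zero, inv_one, chi_one_one]

lemma Q_neg_one_neg_one (h11 : w.p (1, 1) = 0) : Q w (-1 : ℂ) (-1) = -1 := by
  rw [Q_neg_one h11 (by norm_num), show (-(-1 : ℂ)⁻¹) = 1 from by norm_num,
    show (-(-1 : ℂ)) = 1 from by norm_num, chi_one_one]

end S0Aux

/-- case `p_{1,1} = 0`. For every `s` on the unit circle, the set of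
solutions `η` in the closed unit disk of `K(ηs, ηs⁻¹) = 0` is exactly `{0, η(s)}`
("exactly two solutions, one identically zero"), where `η(s)` is real and lies in
`[-1,1]`; moreover `η(1) = 1`, `η(-1) = -1`, and `|η(s)| < 1` for `s ≠ ±1`. -/
theorem statement0 (w : QuadrantWalk) (h11 : w.p (1, 1) = 0) :
    ∃ η : ℂ → ℝ,
      (∀ s : ℂ, ‖s‖ = 1 →
        η s ∈ Set.Icc (-1 : ℝ) 1 ∧
        (∀ z : ℂ, ‖z‖ ≤ 1 →
          (w.K (z * s) (z * s⁻¹) = 0 ↔ z = 0 ∨ z = (η s : ℂ)))) ∧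
      η 1 = 1 ∧ η (-1) = -1 ∧
      (∀ s : ℂ, ‖s‖ = 1 → s ≠ 1 → s ≠ -1 → |η s| < 1) := by
  classical
  set η : ℂ → ℝ := fun s =>
    if h : ‖s‖ = 1 then (S0Aux.exists_root (w := w) h11 h).choose else 0 with hηdef
  have hspec : ∀ s : ℂ, ‖s‖ = 1 →
      η s ∈ Set.Icc (-1 : ℝ) 1 ∧ ((η s : ℝ) : ℂ) = S0Aux.Q w s ((η s : ℝ) : ℂ) := by
    intro s hs
    simp only [hηdef, dif_pos hs]
    exact (S0Aux.exists_root (w := w) h11 hs).choose_spec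
  have habsη : ∀ s : ℂ, ‖s‖ = 1 → ‖(((η s : ℝ) : ℂ))‖ ≤ 1 := by
    intro s hs
    rw [Complex.norm_real, Real.norm_eq_abs]
    obtain ⟨a, b⟩ := (hspec s hs).1
    exact abs_le.2 ⟨a, b⟩
  have hs0 : ∀ s : ℂ, ‖s‖ = 1 → s ≠ 0 := by
    intro s hs h
    rw [h] at hs
    simp at hs
  refine ⟨η, ?_, ?_, ?_, ?_⟩
  · intro s hs
    refine ⟨(hspec s hs).1, ?_⟩
    intro z hz
    rw [S0Aux.K_factor h11 (hs0 s hs) z, mul_eq_zero, sub_eq_zero]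
    constructor
    · rintro (h | h)
      · exact Or.inl h
      · exact Or.inr (S0Aux.uniq h11 hs hz (habsη s hs) h (hspec s hs).2)
    · rintro (h | h)
      · exact Or.inl h
      · right; rw [h]; exact (hspec s hs).2
  · have hs1 : ‖(1 : ℂ)‖ = 1 := norm_one
    have := S0Aux.uniq h11 hs1 (habsη 1 hs1) (le_of_eq norm_one)
      (hspec 1 hs1).2 (S0Aux.Q_one_one h11).symm
    exact_mod_cast this
  · have hsm1 : ‖(-1 : ℂ)‖ = 1 := by simp
    have := S0Aux.uniq h11 hsm1 (habsη (-1) hsm1)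
      (by simp : ‖(-1 : ℂ)‖ ≤ 1)
      (hspec (-1) hsm1).2 (S0Aux.Q_neg_one_neg_one h11).symm
    exact_mod_cast this
  · intro s hs hne1 hnem1
    by_contra hcon
    push_neg at hcon
    have hle : |η s| ≤ 1 := by
      obtain ⟨a, b⟩ := (hspec s hs).1
      exact abs_le.2 ⟨a, b⟩
    have heq1 : |η s| = 1 := le_antisymm hle hcon
    rcases abs_eq (by norm_num : (0:ℝ) ≤ 1) |>.1 heq1 with h1 | hm1
    · -- η s = 1 forces s = 1 by (H3)
      have hroot := (hspec s hs).2
      rw [h1] at hroot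
      push_cast at hroot
      have hchi : S0Aux.chi w s⁻¹ s = 1 := by
        rw [← S0Aux.Q_one h11 (hs0 s hs)]
        exact hroot.symm
      have habs : 
          ‖(∑ kl ∈ w.p.support, (w.p kl : ℂ) * (s⁻¹) ^ kl.1 * s ^ kl.2)‖ = 1 := by
        rw [show (∑ kl ∈ w.p.support, (w.p kl : ℂ) * (s⁻¹) ^ kl.1 * s ^ kl.2)
          = S0Aux.chi w s⁻¹ s from rfl, hchi, norm_one]
      exact hne1 (w.irred s⁻¹ s (by rw [norm_inv, hs]; norm_num) hs habs).2
    · -- η s = -1 forces s = -1 by (H3)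
      have hroot := (hspec s hs).2
      rw [hm1] at hroot
      push_cast at hroot
      have hchi : S0Aux.chi w (-s⁻¹) (-s) = 1 := by
        have := S0Aux.Q_neg_one h11 (hs0 s hs)
        rw [← hroot] at this
        linear_combination this
      have habs : 
          ‖(∑ kl ∈ w.p.support, (w.p kl : ℂ) * (-s⁻¹) ^ kl.1 * (-s) ^ kl.2)‖ = 1 := by
        rw [show (∑ kl ∈ w.p.support, (w.p kl : ℂ) * (-s⁻¹) ^ kl.1 * (-s) ^ kl.2)
          = S0Aux.chi w (-s⁻¹) (-s) from rfl, hchi, norm_one]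
      have hx : ‖(-s⁻¹)‖ = 1 := by
        rw [show (-s⁻¹ : ℂ) = -(s⁻¹) from rfl, norm_neg, norm_inv, hs]; norm_num
      have hy : ‖(-s)‖ = 1 := by rw [norm_neg, hs]
      have := (w.irred (-s⁻¹) (-s) hx hy habs).2
      apply hnem1
      linear_combination -this
end

section
/- Assume p_{1,1}=0. Then 0∈S₁, and for all |s|=1 one has η(−s̄)=−η(s) (bar denoting complex conjugation). Moreover each of the maps s↦η(s)s and s↦η(s)s⁻¹ is exactly two-to-one from the unit circle onto S₁ and S₂ respectively. -/
open Complex Filter Set Topology MeasureTheory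

/-- The set `𝒦 = {(x,y) : K(x,y) = 0, |x| = |y| ≤ 1}`. -/
def QuadrantWalk.kerSet (w : QuadrantWalk) : Set (ℂ × ℂ) :=
  {q | w.K q.1 q.2 = 0 ∧ ‖q.1‖ = ‖q.2‖ ∧ ‖q.1‖ ≤ 1}

/-- The curve `S₁`, the projection of `𝒦` along the first coordinate. -/
def QuadrantWalk.S1 (w : QuadrantWalk) : Set ℂ :=
  {x | ∃ y : ℂ, (x, y) ∈ w.kerSet}

/-- The curve `S₂`, the projection of `𝒦` along the second coordinate. -/
def QuadrantWalk.S2 (w : QuadrantWalk) : Set ℂ :=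
  {y | ∃ x : ℂ, (x, y) ∈ w.kerSet}

section Aux

variable (w : QuadrantWalk)

lemma supp_le {kl : ℤ × ℤ} (h : kl ∈ w.p.support) : kl.1 ≤ 1 ∧ kl.2 ≤ 1 := by
  have hp := Finsupp.mem_support_iff.mp h
  constructor <;> by_contra hc <;> push_neg at hc
  · obtain ⟨k,l⟩ := kl; exact hp (w.small k l (Or.inl hc))
  · obtain ⟨k,l⟩ := kl; exact hp (w.small k l (Or.inr hc))

lemma Ksymm (x y : ℂ) : w.K x y = w.K y x := by
  unfold QuadrantWalk.K
  rw [mul_comm x y]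
  congr 1
  apply Finset.sum_equiv (Equiv.prodComm ℤ ℤ)
  · intro kl
    simp only [Finsupp.mem_support_iff, Equiv.prodComm_apply, Prod.swap]
    rw [show w.p (kl.2, kl.1) = w.p (kl.1, kl.2) from w.symm kl.2 kl.1, Prod.mk.eta]
  · intro kl _
    simp only [Equiv.prodComm_apply, Prod.swap]
    rw [show w.p (kl.2, kl.1) = w.p (kl.1, kl.2) from w.symm kl.2 kl.1, Prod.mk.eta]
    ring

lemma Kconj (x y : ℂ) : (starRingEnd ℂ) (w.K x y) = w.K ((starRingEnd ℂ) x) ((starRingEnd ℂ) y) := by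
  unfold QuadrantWalk.K
  rw [map_sub, map_mul, map_sum]
  congr 1
  apply Finset.sum_congr rfl
  intro kl _
  simp [map_mul, map_pow, Complex.conj_ofReal]

end Aux
/-- exponent in the factored kernel -/
def Ee (kl : ℤ × ℤ) : ℕ := (1 - kl.1).toNat + (1 - kl.2).toNat - 1

noncomputable def Gf (w : QuadrantWalk) (s : ℂ) (t : ℝ) : ℂ :=
  (t : ℂ) - ∑ kl ∈ w.p.support, (w.p kl : ℂ) * (t : ℂ) ^ (Ee kl) * s ^ (kl.2 - kl.1)

lemma not_mem_11 (w : QuadrantWalk) (h11 : w.p (1, 1) = 0) : ((1 : ℤ), (1 : ℤ)) ∉ w.p.support := by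
  exact Finsupp.notMem_support_iff.mpr h11

lemma K_eq (w : QuadrantWalk) (h11 : w.p (1, 1) = 0) {s : ℂ} (hs : ‖s‖ = 1) (t : ℝ) :
    w.K ((t : ℂ) * s) ((t : ℂ) * s⁻¹) = (t : ℂ) * Gf w s t := by
  have hs0 : s ≠ 0 := by
    intro h; rw [h] at hs; simp at hs
  unfold QuadrantWalk.K Gf
  rw [mul_sub, Finset.mul_sum]
  congr 1
  · field_simp
  · apply Finset.sum_congr rfl
    intro kl hkl
    obtain ⟨hk, hl⟩ := supp_le w hkl
    have hne : ¬(kl.1 = 1 ∧ kl.2 = 1) := by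
      rintro ⟨h1, h2⟩
      obtain ⟨k, l⟩ := kl
      simp only at h1 h2
      subst h1; subst h2
      exact not_mem_11 w h11 hkl
    set a := (1 - kl.1).toNat with ha'
    set b := (1 - kl.2).toNat with hb'
    have ha : (a : ℤ) = 1 - kl.1 := Int.toNat_of_nonneg (by omega)
    have hb : (b : ℤ) = 1 - kl.2 := Int.toNat_of_nonneg (by omega)
    have hab : 1 ≤ a + b := by omega
    have hE : Ee kl = a + b - 1 := rfl
    have hzp : s ^ (kl.2 - kl.1) = s ^ a * (s⁻¹) ^ b := by
      calc s ^ (kl.2 - kl.1) = s ^ ((a : ℤ) + (-(b : ℤ))) := by congr 1; omega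
        _ = s ^ (a : ℤ) * s ^ (-(b : ℤ)) := zpow_add₀ hs0 _ _
        _ = s ^ a * (s ^ b)⁻¹ := by rw [zpow_neg, zpow_natCast, zpow_natCast]
        _ = s ^ a * (s⁻¹) ^ b := by rw [inv_pow]
    have htp : ((t : ℂ)) ^ a * (t : ℂ) ^ b = (t : ℂ) * (t : ℂ) ^ (a + b - 1) := by
      rw [← pow_add, ← pow_succ']
      congr 1; omega
    calc (w.p kl : ℂ) * ((t : ℂ) * s) ^ a * ((t : ℂ) * s⁻¹) ^ b
        = (w.p kl : ℂ) * ((t : ℂ) ^ a * (t : ℂ) ^ b) * (s ^ a * (s⁻¹) ^ b) := by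
          rw [mul_pow, mul_pow]; ring
      _ = (w.p kl : ℂ) * ((t : ℂ) * (t : ℂ) ^ (a + b - 1)) * s ^ (kl.2 - kl.1) := by
          rw [htp, hzp]
      _ = (t : ℂ) * ((w.p kl : ℂ) * (t : ℂ) ^ (Ee kl) * s ^ (kl.2 - kl.1)) := by
          rw [hE]; ring

lemma Gconj (w : QuadrantWalk) {s : ℂ} (hs : ‖s‖ = 1) (t : ℝ) :
    (starRingEnd ℂ) (Gf w s t) = Gf w s t := by
  have hs0 : s ≠ 0 := by intro h; rw [h] at hs; simp at hs
  have hsc : (starRingEnd ℂ) s = s⁻¹ := (Complex.inv_eq_conj hs).symm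
  unfold Gf
  rw [map_sub, map_sum, Complex.conj_ofReal]
  congr 1
  apply Finset.sum_equiv (Equiv.prodComm ℤ ℤ)
  · intro kl
    simp only [Finsupp.mem_support_iff, Equiv.prodComm_apply, Prod.swap]
    rw [show w.p (kl.2, kl.1) = w.p (kl.1, kl.2) from w.symm kl.2 kl.1, Prod.mk.eta]
  · intro kl _
    simp only [Equiv.prodComm_apply, Prod.swap]
    rw [map_mul, map_mul, Complex.conj_ofReal, ← Complex.ofReal_pow, Complex.conj_ofReal,
      map_zpow₀, hsc, inv_zpow, ← zpow_neg]
    rw [show w.p (kl.2, kl.1) = w.p (kl.1, kl.2) from w.symm kl.2 kl.1, Prod.mk.eta]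
    have : Ee (kl.2, kl.1) = Ee kl := by unfold Ee; simp only; omega
    rw [this, Complex.ofReal_pow]
    congr 2
    omega
noncomputable def gf (w : QuadrantWalk) (s : ℂ) (t : ℝ) : ℝ := (Gf w s t).re

lemma Gf_eq_gf (w : QuadrantWalk) {s : ℂ} (hs : ‖s‖ = 1) (t : ℝ) :
    Gf w s t = ((gf w s t : ℝ) : ℂ) :=
  (Complex.conj_eq_iff_re.mp (Gconj w hs t)).symm

lemma gf_cont (w : QuadrantWalk) (s : ℂ) : Continuous (gf w s) := by
  apply Complex.continuous_re.comp
  unfold Gf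
  exact Complex.continuous_ofReal.sub (continuous_finset_sum _ fun kl _ =>
    (continuous_const.mul (Complex.continuous_ofReal.pow _)).mul continuous_const)

lemma abs_sum_le (w : QuadrantWalk) {x y : ℂ} (hx : ‖x‖ = 1) (hy : ‖y‖ = 1) :
    ‖∑ kl ∈ w.p.support, (w.p kl : ℂ) * x ^ kl.1 * y ^ kl.2‖ ≤ 1 := by
  calc ‖∑ kl ∈ w.p.support, (w.p kl : ℂ) * x ^ kl.1 * y ^ kl.2‖
      ≤ ∑ kl ∈ w.p.support, ‖(w.p kl : ℂ) * x ^ kl.1 * y ^ kl.2‖ :=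
        norm_sum_le _ _
    _ = ∑ kl ∈ w.p.support, w.p kl := by
        apply Finset.sum_congr rfl
        intro kl _
        rw [norm_mul, norm_mul, norm_zpow, norm_zpow, hx, hy, one_zpow, one_zpow,
          Complex.norm_real, Real.norm_eq_abs, _root_.abs_of_nonneg (w.nonneg kl), mul_one, mul_one]
    _ = 1 := w.sum_one

lemma gf_one_pos (w : QuadrantWalk) {s : ℂ} (hs : ‖s‖ = 1) (hs1 : s ≠ 1) :
    0 < gf w s 1 := by
  have hs0 : s ≠ 0 := by intro h; rw [h] at hs; simp at hs
  set A := ∑ kl ∈ w.p.support, (w.p kl : ℂ) * (s⁻¹) ^ kl.1 * s ^ kl.2 with hA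
  have hGf : Gf w s 1 = 1 - A := by
    unfold Gf
    rw [Complex.ofReal_one]
    congr 1
    apply Finset.sum_congr rfl
    intro kl _
    rw [one_pow, mul_one, inv_zpow, ← zpow_neg, mul_assoc, ← zpow_add₀ hs0]
    congr 2
    omega
  have hinv : ‖s⁻¹‖ = 1 := by rw [norm_inv, hs]; norm_num
  have habs : ‖A‖ ≤ 1 := abs_sum_le w hinv hs
  have hne : ‖A‖ ≠ 1 := by
    intro h
    exact hs1 (w.irred s⁻¹ s hinv hs h).2
  have hlt : ‖A‖ < 1 := lt_of_le_of_ne habs hne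
  have hre : A.re < 1 := lt_of_le_of_lt (Complex.re_le_norm A) hlt
  have : gf w s 1 = 1 - A.re := by unfold gf; rw [hGf]; simp
  rw [this]; linarith

lemma Gf_neg (w : QuadrantWalk) (h11 : w.p (1, 1) = 0) {s : ℂ} (hs : ‖s‖ = 1) (t : ℝ) :
    Gf w (-s) (-t) = -Gf w s t := by
  unfold Gf
  push_cast
  have hsum : ∑ kl ∈ w.p.support, (w.p kl : ℂ) * (-(t:ℂ)) ^ Ee kl * (-s) ^ (kl.2 - kl.1)
      = -∑ kl ∈ w.p.support, (w.p kl : ℂ) * (t:ℂ) ^ Ee kl * s ^ (kl.2 - kl.1) := by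
    rw [← Finset.sum_neg_distrib]
    apply Finset.sum_congr rfl
    intro kl hkl
    obtain ⟨hk, hl⟩ := supp_le w hkl
    have hne : ¬(kl.1 = 1 ∧ kl.2 = 1) := by
      rintro ⟨h1, h2⟩
      obtain ⟨k, l⟩ := kl
      simp only at h1 h2
      subst h1; subst h2
      exact not_mem_11 w h11 hkl
    have hE : (Ee kl : ℤ) = 1 - kl.1 - kl.2 := by unfold Ee; omega
    have hm : (-1:ℂ) ^ (Ee kl) * (-1:ℂ) ^ (kl.2 - kl.1) = -1 := by
      rw [← zpow_natCast (-1:ℂ) (Ee kl), ← zpow_add₀ (by norm_num : (-1:ℂ) ≠ 0)]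
      have h2 : (Ee kl : ℤ) + (kl.2 - kl.1) = 2 * (-kl.1) + 1 := by omega
      rw [h2, zpow_add₀ (by norm_num : (-1:ℂ) ≠ 0), zpow_mul, zpow_one]
      norm_num
    calc (w.p kl : ℂ) * (-(t:ℂ)) ^ Ee kl * (-s) ^ (kl.2 - kl.1)
        = ((-1:ℂ) ^ (Ee kl) * (-1:ℂ) ^ (kl.2 - kl.1)) *
            ((w.p kl : ℂ) * (t:ℂ) ^ Ee kl * s ^ (kl.2 - kl.1)) := by
          rw [neg_pow, show (-s) = (-1) * s from by ring, mul_zpow]; ring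
      _ = -((w.p kl : ℂ) * (t:ℂ) ^ Ee kl * s ^ (kl.2 - kl.1)) := by rw [hm]; ring
  rw [hsum]
  ring
lemma gf_neg_one_neg (w : QuadrantWalk) (h11 : w.p (1, 1) = 0) {s : ℂ}
    (hs : ‖s‖ = 1) (hs1 : s ≠ -1) : gf w s (-1) < 0 := by
  have h1 : Gf w s (-1) = -Gf w (-s) 1 := by
    have := Gf_neg w h11 (s := -s) (by rwa [norm_neg]) 1
    rw [neg_neg] at this
    exact this
  have h2 : 0 < gf w (-s) 1 := gf_one_pos w (by rwa [norm_neg]) (by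
    intro h
    apply hs1
    rw [← neg_neg s, h])
  have : gf w s (-1) = -gf w (-s) 1 := by
    unfold gf
    rw [h1, Complex.neg_re]
  rw [this]; linarith

lemma gf_zero (w : QuadrantWalk) (h11 : w.p (1, 1) = 0) {s : ℂ} (hs : ‖s‖ = 1) :
    gf w s 0 = -(2 * w.p (0, 1) * s.re) := by
  have hsc : s⁻¹ = (starRingEnd ℂ) s := Complex.inv_eq_conj hs
  have hsum : ∑ kl ∈ w.p.support, (w.p kl : ℂ) * (0:ℂ) ^ Ee kl * s ^ (kl.2 - kl.1)
      = (w.p (1,0) : ℂ) * s ^ ((0:ℤ) - 1) + (w.p (0,1) : ℂ) * s ^ ((1:ℤ) - 0) := by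
    have hf : ∀ kl ∈ w.p.support, kl ∉ ({((1:ℤ),(0:ℤ)), ((0:ℤ),(1:ℤ))} : Finset (ℤ × ℤ)) →
        (w.p kl : ℂ) * (0:ℂ) ^ Ee kl * s ^ (kl.2 - kl.1) = 0 := by
      intro kl hkl hnm
      obtain ⟨hk, hl⟩ := supp_le w hkl
      have hne : ¬(kl.1 = 1 ∧ kl.2 = 1) := by
        rintro ⟨h1, h2⟩
        obtain ⟨k, l⟩ := kl
        simp only at h1 h2
        subst h1; subst h2
        exact not_mem_11 w h11 hkl
      simp only [Finset.mem_insert, Finset.mem_singleton] at hnm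
      push_neg at hnm
      obtain ⟨hn1, hn2⟩ := hnm
      have hE : 1 ≤ Ee kl := by
        obtain ⟨k, l⟩ := kl
        have hn1' : ¬(k = 1 ∧ l = 0) := fun ⟨a, b⟩ => hn1 (by rw [a, b])
        have hn2' : ¬(k = 0 ∧ l = 1) := fun ⟨a, b⟩ => hn2 (by rw [a, b])
        unfold Ee
        simp only at hk hl hne ⊢
        omega
      rw [zero_pow (by omega), mul_zero, zero_mul]
    rw [← Finset.sum_subset (Finset.inter_subset_left (s₂ := ({((1:ℤ),(0:ℤ)), ((0:ℤ),(1:ℤ))} : Finset (ℤ × ℤ))))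
        (fun kl h1 h2 => hf kl h1 (fun hm => h2 (Finset.mem_inter.mpr ⟨h1, hm⟩)))]
    rw [Finset.sum_subset (Finset.inter_subset_right (s₁ := w.p.support))
        (fun kl h1 h2 => ?_)]
    · rw [Finset.sum_pair (by decide : ((1:ℤ),(0:ℤ)) ≠ ((0:ℤ),(1:ℤ)))]
      have e1 : Ee ((1:ℤ),(0:ℤ)) = 0 := by decide
      have e2 : Ee ((0:ℤ),(1:ℤ)) = 0 := by decide
      rw [e1, e2]
      norm_num
    · have : w.p kl = 0 := by
        by_contra hc
        exact h2 (Finset.mem_inter.mpr ⟨Finsupp.mem_support_iff.mpr hc, h1⟩)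
      rw [this]
      simp
  unfold gf Gf
  rw [Complex.ofReal_zero, hsum, w.symm 1 0]
  have h1 : s ^ ((0:ℤ) - 1) = (starRingEnd ℂ) s := by
    rw [show (0:ℤ) - 1 = -1 from rfl, zpow_neg, zpow_one, hsc]
  have h2 : s ^ ((1:ℤ) - 0) = s := by norm_num
  rw [h1, h2]
  simp only [Complex.sub_re, Complex.add_re, Complex.mul_re, Complex.conj_re, Complex.conj_im,
    Complex.ofReal_re, Complex.ofReal_im, Complex.zero_re]
  ring
lemma p01_pos (w : QuadrantWalk) (h11 : w.p (1, 1) = 0) : 0 < w.p (0, 1) := by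
  rcases (w.nonneg (0, 1)).lt_or_eq with h | h
  · exact h
  exfalso
  have h01 : w.p (0, 1) = 0 := h.symm
  have h10 : w.p (1, 0) = 0 := by rw [w.symm]; exact h01
  have hsle : ∀ kl ∈ w.p.support, kl.1 + kl.2 ≤ 0 := by
    intro kl hkl
    obtain ⟨hk, hl⟩ := supp_le w hkl
    have hp := Finsupp.mem_support_iff.mp hkl
    obtain ⟨k, l⟩ := kl
    have h1 : ¬(k = 1 ∧ l = 1) := fun ⟨a, b⟩ => hp (by rw [a, b]; exact h11)
    have h2 : ¬(k = 0 ∧ l = 1) := fun ⟨a, b⟩ => hp (by rw [a, b]; exact h01)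
    have h3 : ¬(k = 1 ∧ l = 0) := fun ⟨a, b⟩ => hp (by rw [a, b]; exact h10)
    simp only at hk hl ⊢
    omega
  have hsum : ∑ kl ∈ w.p.support, ((kl.1 + kl.2 : ℤ) : ℝ) * w.p kl = 0 := by
    calc ∑ kl ∈ w.p.support, ((kl.1 + kl.2 : ℤ) : ℝ) * w.p kl
        = ∑ kl ∈ w.p.support, ((kl.1 : ℝ) * w.p kl + (kl.2 : ℝ) * w.p kl) := by
          apply Finset.sum_congr rfl; intros; push_cast; ring
      _ = ∑ kl ∈ w.p.support, (kl.1 : ℝ) * w.p kl + ∑ kl ∈ w.p.support, (kl.2 : ℝ) * w.p kl :=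
          Finset.sum_add_distrib
      _ = 0 := by rw [w.drift1, w.drift2, add_zero]
  have hzero : ∀ kl ∈ w.p.support, kl.1 + kl.2 = 0 := by
    have hterm := (Finset.sum_eq_zero_iff_of_nonpos (fun kl hkl => by
      have hc : ((kl.1 + kl.2 : ℤ) : ℝ) ≤ 0 := by exact_mod_cast hsle kl hkl
      have := w.nonneg kl
      nlinarith)).mp hsum
    intro kl hkl
    have hp := Finsupp.mem_support_iff.mp hkl
    rcases mul_eq_zero.mp (hterm kl hkl) with hc | hc
    · exact_mod_cast hc
    · exact absurd hc hp
  have habs1 : ‖(-1 : ℂ)‖ = 1 := by simp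
  have hsum1 : ∑ kl ∈ w.p.support, (w.p kl : ℂ) * (-1 : ℂ) ^ kl.1 * (-1 : ℂ) ^ kl.2 = 1 := by
    calc ∑ kl ∈ w.p.support, (w.p kl : ℂ) * (-1 : ℂ) ^ kl.1 * (-1 : ℂ) ^ kl.2
        = ∑ kl ∈ w.p.support, (w.p kl : ℂ) := by
          apply Finset.sum_congr rfl
          intro kl hkl
          have h0 : kl.2 = -kl.1 := by have := hzero kl hkl; omega
          rw [h0, zpow_neg, mul_assoc, mul_inv_cancel₀ (zpow_ne_zero _ (by norm_num)), mul_one]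
      _ = 1 := by rw [← Complex.ofReal_sum, w.sum_one, Complex.ofReal_one]
  have := (w.irred (-1) (-1) habs1 habs1 (by rw [hsum1]; simp)).1
  norm_num at this
def Heta (w : QuadrantWalk) (η : ℂ → ℝ) : Prop :=
  ∀ s : ℂ, ‖s‖ = 1 →
      η s ∈ Set.Icc (-1 : ℝ) 1 ∧
      (∀ z : ℂ, ‖z‖ ≤ 1 →
        (w.K (z * s) (z * s⁻¹) = 0 ↔ z = 0 ∨ z = (η s : ℂ)))

section Eta

variable {w : QuadrantWalk} {η : ℂ → ℝ} (hη : Heta w η)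
include hη

lemma eta_abs_le {s : ℂ} (hs : ‖s‖ = 1) : ‖((η s : ℝ) : ℂ)‖ ≤ 1 := by
  rw [Complex.norm_real, Real.norm_eq_abs]
  have := (hη s hs).1
  rw [Set.mem_Icc] at this
  rw [abs_le]
  exact this

lemma eta_root {s : ℂ} (hs : ‖s‖ = 1) :
    w.K (((η s : ℝ) : ℂ) * s) (((η s : ℝ) : ℂ) * s⁻¹) = 0 :=
  ((hη s hs).2 _ (eta_abs_le hη hs)).mpr (Or.inr rfl)

lemma root_eq {s : ℂ} (hs : ‖s‖ = 1) {z : ℂ} (hz : ‖z‖ ≤ 1)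
    (hz0 : z ≠ 0) (hK : w.K (z * s) (z * s⁻¹) = 0) : z = ((η s : ℝ) : ℂ) :=
  (((hη s hs).2 z hz).mp hK).resolve_left hz0

lemma eta_neg {s : ℂ} (hs : ‖s‖ = 1) : η (-s) = -η s := by
  have hns : ‖-s‖ = 1 := by rwa [norm_neg]
  have key : ∀ u v : ℂ, ‖u‖ = 1 → ‖v‖ = 1 → v = -u →
      (-((η u : ℝ) : ℂ) = 0 ∨ -((η u : ℝ) : ℂ) = ((η v : ℝ) : ℂ)) := by
    intro u v hu hv huv
    have h0 := eta_root hη hu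
    have h1 : w.K ((-((η u : ℝ) : ℂ)) * v) ((-((η u : ℝ) : ℂ)) * v⁻¹) = 0 := by
      rw [huv, inv_neg]
      convert h0 using 2 <;> ring
    exact ((hη v hv).2 _ (by rw [norm_neg]; exact eta_abs_le hη hu)).mp h1
  have c1 := key s (-s) hs hns rfl
  have c2 := key (-s) s hns hs (neg_neg s).symm
  have goal : ((η (-s) : ℝ) : ℂ) = -((η s : ℝ) : ℂ) := by
    rcases c1 with h | h
    · rcases c2 with h' | h'
      · have hb : ((η s : ℝ) : ℂ) = 0 := by linear_combination -h
        have ha : ((η (-s) : ℝ) : ℂ) = 0 := by linear_combination -h'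
        rw [ha, hb, neg_zero]
      · linear_combination -h'
    · linear_combination -h
  exact_mod_cast goal

lemma eta_conj {s : ℂ} (hs : ‖s‖ = 1) : η ((starRingEnd ℂ) s) = η s := by
  have hcs : ‖(starRingEnd ℂ) s‖ = 1 := by rwa [Complex.norm_conj]
  have key : ∀ u v : ℂ, ‖u‖ = 1 → ‖v‖ = 1 → v = (starRingEnd ℂ) u →
      (((η u : ℝ) : ℂ) = 0 ∨ ((η u : ℝ) : ℂ) = ((η v : ℝ) : ℂ)) := by
    intro u v hu hv huv
    have h0 := eta_root hη hu
    have h1 : w.K (((η u : ℝ) : ℂ) * v) (((η u : ℝ) : ℂ) * v⁻¹) = 0 := by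
      have := congrArg (starRingEnd ℂ) h0
      rw [Kconj, map_zero, map_mul, map_mul, Complex.conj_ofReal, map_inv₀] at this
      rw [huv]
      exact this
    exact ((hη v hv).2 _ (eta_abs_le hη hu)).mp h1
  have c1 := key s ((starRingEnd ℂ) s) hs hcs rfl
  have c2 := key ((starRingEnd ℂ) s) s hcs hs (Complex.conj_conj s).symm
  have goal : ((η ((starRingEnd ℂ) s) : ℝ) : ℂ) = ((η s : ℝ) : ℂ) := by
    rcases c2 with h | h
    · rcases c1 with h' | h'
      · rw [h, h']
      · exact h'.symm
    · exact h
  exact_mod_cast goal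

lemma eta_inv {s : ℂ} (hs : ‖s‖ = 1) : η s⁻¹ = η s := by
  rw [Complex.inv_eq_conj hs]
  exact eta_conj hη hs

lemma eta_one : η 1 = 1 := by
  have h1 : ‖(1 : ℂ)‖ = 1 := by simp
  have hK : w.K ((1 : ℂ) * 1) ((1 : ℂ) * 1⁻¹) = 0 := by
    unfold QuadrantWalk.K
    simp only [one_pow, mul_one, inv_one, one_mul]
    rw [← Complex.ofReal_sum, w.sum_one, Complex.ofReal_one, sub_self]
  rcases ((hη 1 h1).2 1 (by simp)).mp hK with h | h
  · exact absurd h one_ne_zero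
  · have h2 : ((η 1 : ℝ) : ℂ) = 1 := h.symm
    exact_mod_cast h2

lemma eta_I : η Complex.I = 0 := by
  have hI : ‖Complex.I‖ = 1 := by simp
  have h2 : η (-Complex.I) = η Complex.I := by
    rw [← Complex.conj_I]
    exact eta_conj hη hI
  have h3 : η (-Complex.I) = -η Complex.I := eta_neg hη hI
  linarith

end Eta
lemma eta_ne_zero {w : QuadrantWalk} {η : ℂ → ℝ} (hη : Heta w η) (h11 : w.p (1, 1) = 0)
    {s : ℂ} (hs : ‖s‖ = 1) (hre : s.re ≠ 0) : η s ≠ 0 := by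
  by_cases hs1 : s = 1
  · rw [hs1, eta_one hη]; norm_num
  by_cases hsm1 : s = -1
  · have h1 : η (-1 : ℂ) = -η 1 := eta_neg hη (by simp)
    rw [hsm1, h1, eta_one hη]; norm_num
  have hp01 := p01_pos w h11
  have key : ∀ t₀ : ℝ, t₀ ≠ 0 → -1 < t₀ → t₀ < 1 → gf w s t₀ = 0 → η s ≠ 0 := by
    intro t₀ ht0 hm1 h1 hgf
    have hK : w.K ((t₀ : ℂ) * s) ((t₀ : ℂ) * s⁻¹) = 0 := by
      rw [K_eq w h11 hs, Gf_eq_gf w hs, hgf, Complex.ofReal_zero, mul_zero]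
    have ht0c : (t₀ : ℂ) ≠ 0 := by exact_mod_cast ht0
    have habs : ‖(t₀ : ℂ)‖ ≤ 1 := by
      rw [Complex.norm_real, Real.norm_eq_abs, abs_le]; constructor <;> linarith
    have heq := root_eq hη hs habs ht0c hK
    intro hc
    rw [hc] at heq
    simp only [Complex.ofReal_zero] at heq
    exact ht0c heq
  rcases hre.lt_or_gt with hneg | hpos
  · have hg0 : 0 < gf w s 0 := by
      rw [gf_zero w h11 hs]; nlinarith
    have hgm1 : gf w s (-1) < 0 := gf_neg_one_neg w h11 hs hsm1
    obtain ⟨t₀, ht₀m, ht₀⟩ := intermediate_value_Ioo (by norm_num : (-1 : ℝ) ≤ 0)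
      ((gf_cont w s).continuousOn) (Set.mem_Ioo.mpr ⟨hgm1, hg0⟩)
    exact key t₀ (ne_of_lt ht₀m.2) ht₀m.1 (by linarith [ht₀m.2]) ht₀
  · have hg0 : gf w s 0 < 0 := by
      rw [gf_zero w h11 hs]; nlinarith
    have hg1 : 0 < gf w s 1 := gf_one_pos w hs hs1
    obtain ⟨t₀, ht₀m, ht₀⟩ := intermediate_value_Ioo (by norm_num : (0 : ℝ) ≤ 1)
      ((gf_cont w s).continuousOn) (Set.mem_Ioo.mpr ⟨hg0, hg1⟩)
    exact key t₀ (ne_of_gt ht₀m.1) (by linarith [ht₀m.1]) ht₀m.2 ht₀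

lemma fib1 {w : QuadrantWalk} {η : ℂ → ℝ} (hη : Heta w η) (h11 : w.p (1, 1) = 0) :
    ∀ x ∈ w.S1, ∃ c : ℂ, ‖c‖ = 1 ∧
      {s : ℂ | ‖s‖ = 1 ∧ ((η s : ℝ) : ℂ) * s = x} = {c, -c} := by
  intro x hx
  obtain ⟨y, hK, hxy, hx1⟩ := hx
  by_cases hx0 : x = 0
  · refine ⟨Complex.I, by simp, ?_⟩
    ext s
    simp only [Set.mem_setOf_eq, Set.mem_insert_iff, Set.mem_singleton_iff]
    constructor
    · rintro ⟨hs, hsx⟩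
      have hs0 : s ≠ 0 := by intro h; rw [h] at hs; simp at hs
      have hηs : η s = 0 := by
        have h0 : ((η s : ℝ) : ℂ) = 0 := by
          rcases mul_eq_zero.mp (hsx.trans hx0) with h | h
          · exact h
          · exact absurd h hs0
        exact_mod_cast h0
      have hre : s.re = 0 := by
        by_contra hc
        exact eta_ne_zero hη h11 hs hc hηs
      have hnsq : Complex.normSq s = 1 := by
        rw [← Complex.sq_norm, hs]; norm_num
      rw [Complex.normSq_apply, hre] at hnsq
      have h2 : (s.im - 1) * (s.im + 1) = 0 := by nlinarith
      rcases mul_eq_zero.mp h2 with h | h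
      · left; apply Complex.ext <;> simp [hre] <;> linarith
      · right; apply Complex.ext <;> simp [hre] <;> linarith
    · intro h
      have hI0 : η Complex.I = 0 := eta_I hη
      rcases h with h | h
      · subst h
        exact ⟨by simp, by rw [hI0]; simp [hx0]⟩
      · subst h
        have hnI : η (-Complex.I) = 0 := by
          rw [eta_neg hη (by simp), hI0, neg_zero]
        exact ⟨by simp, by rw [hnI]; simp [hx0]⟩
  · have hy0 : y ≠ 0 := by
      intro h
      rw [h, norm_zero] at hxy
      exact hx0 (norm_eq_zero.mp hxy)
    set s₀ : ℂ := (x / y) ^ ((2 : ℂ)⁻¹) with hs₀def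
    have hsq : s₀ ^ (2 : ℕ) = x / y := Complex.cpow_nat_inv_pow _ two_ne_zero
    have hs₀ : ‖s₀‖ = 1 := by
      have h2 : ‖s₀‖ ^ (2 : ℕ) = 1 := by
        rw [← norm_pow, hsq, norm_div, hxy, div_self]
        rw [hxy] at *
        exact fun hc => hy0 (norm_eq_zero.mp hc)
      have h3 := norm_nonneg s₀
      have hfac : (‖s₀‖ - 1) * (‖s₀‖ + 1) = 0 := by nlinarith
      rcases mul_eq_zero.mp hfac with h | h
      · linarith
      · linarith
    have hs₀0 : s₀ ≠ 0 := by intro h; rw [h, norm_zero] at hs₀; norm_num at hs₀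
    set z : ℂ := x / s₀ with hzdef
    have hz1 : z * s₀ = x := div_mul_cancel₀ x hs₀0
    have hz2 : z * s₀⁻¹ = y := by
      calc z * s₀⁻¹ = x / (s₀ * s₀) := by rw [hzdef, ← div_eq_mul_inv, div_div]
        _ = x / (x / y) := by rw [show s₀ * s₀ = x / y from by rw [← pow_two]; exact hsq]
        _ = y := by rw [div_div_eq_mul_div, mul_comm, mul_div_assoc, div_self hx0, mul_one]
    have hzabs : ‖z‖ ≤ 1 := by
      rw [hzdef, norm_div, hs₀, div_one]; exact hx1
    have hzne : z ≠ 0 := div_ne_zero hx0 hs₀0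
    have hKz : w.K (z * s₀) (z * s₀⁻¹) = 0 := by rw [hz1, hz2]; exact hK
    have hzeq : z = ((η s₀ : ℝ) : ℂ) := root_eq hη hs₀ hzabs hzne hKz
    have hxs₀ : ((η s₀ : ℝ) : ℂ) * s₀ = x := by rw [← hzeq]; exact hz1
    have hηs₀ne : ((η s₀ : ℝ) : ℂ) ≠ 0 := by rw [← hzeq]; exact hzne
    refine ⟨s₀, hs₀, ?_⟩
    ext s
    simp only [Set.mem_setOf_eq, Set.mem_insert_iff, Set.mem_singleton_iff]
    constructor
    · rintro ⟨hs, hsx⟩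
      have habs : |η s| = |η s₀| := by
        have h1 := congrArg (fun z : ℂ => ‖z‖) hsx
        have h2 := congrArg (fun z : ℂ => ‖z‖) hxs₀
        rw [norm_mul, hs, mul_one, Complex.norm_real, Real.norm_eq_abs] at h1
        rw [norm_mul, hs₀, mul_one, Complex.norm_real, Real.norm_eq_abs] at h2
        rw [h1, ← h2]
      rcases abs_eq_abs.mp habs with h | h
      · left
        exact mul_left_cancel₀ hηs₀ne (by rw [h] at hsx; rw [hsx, hxs₀])
      · right
        have hsx' : ((η s₀ : ℝ) : ℂ) * (-s) = ((η s₀ : ℝ) : ℂ) * s₀ := by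
          have hc : ((η s : ℝ) : ℂ) = -((η s₀ : ℝ) : ℂ) := by rw [h]; push_cast; ring
          rw [hc] at hsx
          calc ((η s₀ : ℝ) : ℂ) * (-s) = -((η s₀ : ℝ) : ℂ) * s := by ring
            _ = x := hsx
            _ = ((η s₀ : ℝ) : ℂ) * s₀ := hxs₀.symm
        have h3 := mul_left_cancel₀ hηs₀ne hsx'
        exact neg_eq_iff_eq_neg.mp h3
    · intro h
      rcases h with h | h
      · subst h; exact ⟨hs₀, hxs₀⟩
      · subst h
        refine ⟨by rw [norm_neg]; exact hs₀, ?_⟩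
        rw [eta_neg hη hs₀]
        push_cast
        linear_combination hxs₀
/-- case `p_{1,1} = 0`. Here `η(s)` is the distinguished root in the
closed unit disk of `K(ηs, ηs⁻¹) = 0` (characterized by: the solution set in the
closed disk is exactly `{0, η(s)}` and `η(s) ∈ [-1,1]` is real). Then `0 ∈ S₁`,
`η(-conj s) = -η(s)`, and the maps `s ↦ η(s)s`, `s ↦ η(s)s⁻¹` are exactly two-to-one
from the unit circle onto `S₁`, resp. `S₂`. -/
theorem statement2 (w : QuadrantWalk) (h11 : w.p (1, 1) = 0)
    (η : ℂ → ℝ)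
    (hη : ∀ s : ℂ, ‖s‖ = 1 →
      η s ∈ Set.Icc (-1 : ℝ) 1 ∧
      (∀ z : ℂ, ‖z‖ ≤ 1 →
        (w.K (z * s) (z * s⁻¹) = 0 ↔ z = 0 ∨ z = (η s : ℂ)))) :
    (0 : ℂ) ∈ w.S1 ∧
    (∀ s : ℂ, ‖s‖ = 1 → η (-(starRingEnd ℂ s)) = - η s) ∧
    (∀ s : ℂ, ‖s‖ = 1 → (η s : ℂ) * s ∈ w.S1 ∧ (η s : ℂ) * s⁻¹ ∈ w.S2) ∧
    (∀ x ∈ w.S1, ({s : ℂ | ‖s‖ = 1 ∧ (η s : ℂ) * s = x}).ncard = 2) ∧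
    (∀ y ∈ w.S2, ({s : ℂ | ‖s‖ = 1 ∧ (η s : ℂ) * s⁻¹ = y}).ncard = 2) := by
  have hη' : Heta w η := hη
  refine ⟨?_, ?_, ?_, ?_, ?_⟩
  · -- 0 ∈ S1
    have h := ((hη 1 (by simp)).2 0 (by simp)).mpr (Or.inl rfl)
    exact ⟨0, by simpa using h, by simp, by simp⟩
  · -- η(-conj s) = -η s
    intro s hs
    rw [eta_neg hη' (by rwa [Complex.norm_conj]), eta_conj hη' hs]
  · -- images in S1, S2
    intro s hs
    have hroot := eta_root hη' hs
    have habsη : ‖((η s : ℝ) : ℂ)‖ ≤ 1 := eta_abs_le hη' hs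
    have hsinv : ‖s⁻¹‖ = 1 := by rw [norm_inv, hs]; norm_num
    constructor
    · exact ⟨((η s : ℝ) : ℂ) * s⁻¹, hroot,
        by rw [norm_mul, norm_mul, hs, hsinv],
        by rw [norm_mul, hs, mul_one]; exact habsη⟩
    · exact ⟨((η s : ℝ) : ℂ) * s, hroot,
        by rw [norm_mul, norm_mul, hs, hsinv],
        by rw [norm_mul, hs, mul_one]; exact habsη⟩
  · -- fibers of s ↦ η(s) s
    intro x hx
    obtain ⟨c, hc, hset⟩ := fib1 hη' h11 x hx
    rw [hset]
    apply Set.ncard_pair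
    intro h
    have hc0 : c ≠ 0 := fun h0 => by rw [h0, norm_zero] at hc; norm_num at hc
    exact hc0 (add_self_eq_zero.mp (by linear_combination h))
  · -- fibers of s ↦ η(s) s⁻¹
    intro y hy
    obtain ⟨x, hK, hxy, hx1⟩ := hy
    have hyS1 : y ∈ w.S1 :=
      ⟨x, by rw [Ksymm]; exact hK, hxy.symm, by rw [← hxy]; exact hx1⟩
    obtain ⟨c, hc, hset⟩ := fib1 hη' h11 y hyS1
    have hc0 : c ≠ 0 := fun h0 => by rw [h0, norm_zero] at hc; norm_num at hc
    have hcmem : ‖c‖ = 1 ∧ ((η c : ℝ) : ℂ) * c = y := by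
      have hm : c ∈ {s : ℂ | ‖s‖ = 1 ∧ ((η s : ℝ) : ℂ) * s = y} := by
        rw [hset]; left; rfl
      exact hm
    have hncmem : ‖-c‖ = 1 ∧ ((η (-c) : ℝ) : ℂ) * (-c) = y := by
      have hm : -c ∈ {s : ℂ | ‖s‖ = 1 ∧ ((η s : ℝ) : ℂ) * s = y} := by
        rw [hset]; right; rfl
      exact hm
    have hgen : ∀ d : ℂ, (‖d‖ = 1 ∧ ((η d : ℝ) : ℂ) * d = y) →
        (‖d⁻¹‖ = 1 ∧ ((η (d⁻¹) : ℝ) : ℂ) * (d⁻¹)⁻¹ = y) := by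
      rintro d ⟨hd, hdy⟩
      refine ⟨by rw [norm_inv, hd]; norm_num, ?_⟩
      rw [eta_inv hη' hd, inv_inv]
      exact hdy
    have hseteq : {s : ℂ | ‖s‖ = 1 ∧ ((η s : ℝ) : ℂ) * s⁻¹ = y} = {c⁻¹, -c⁻¹} := by
      ext s
      simp only [Set.mem_setOf_eq, Set.mem_insert_iff, Set.mem_singleton_iff]
      constructor
      · rintro ⟨hs, hsy⟩
        have hu : s⁻¹ ∈ {s : ℂ | ‖s‖ = 1 ∧ ((η s : ℝ) : ℂ) * s = y} := by
          refine ⟨by rw [norm_inv, hs]; norm_num, ?_⟩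
          rw [eta_inv hη' hs]
          exact hsy
        rw [hset] at hu
        rcases hu with h | h
        · left; rw [← inv_inv s, h]
        · right; rw [← inv_inv s, h, inv_neg]
      · intro h
        rcases h with h | h
        · subst h
          exact hgen c hcmem
        · subst h
          obtain ⟨h1, h2⟩ := hgen (-c) hncmem
          rw [inv_neg] at h1 h2
          exact ⟨h1, h2⟩
    rw [hseteq]
    apply Set.ncard_pair
    intro h
    have hci : c⁻¹ ≠ 0 := inv_ne_zero hc0
    exact hci (add_self_eq_zero.mp (by linear_combination h))
end

section
/- The function η is right-differentiable at s=1 along the unit circle, with lim_{λ→0⁺} (η(e^{iλ}) − 1)/(e^{iλ} − 1) = i·√( Σ p_{k,ℓ}(k−ℓ)² / Σ p_{k,ℓ}(k+ℓ)² ). Consequently the curve S₁ has a corner point at 1 whose interior angle equals θ = arccos( −Σ kℓ p_{k,ℓ} / (√(Σ k² p_{k,ℓ}) · √(Σ ℓ² p_{k,ℓ})) ). -/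
open Complex Filter Set Topology MeasureTheory

/-- The angle `θ = arccos( -Σ kℓ p_{k,ℓ} / (√(Σ k² p_{k,ℓ}) √(Σ ℓ² p_{k,ℓ})) )`. -/
noncomputable def QuadrantWalk.theta (w : QuadrantWalk) : ℝ :=
  Real.arccos (-(∑ kl ∈ w.p.support, (kl.1 : ℝ) * (kl.2 : ℝ) * w.p kl) /
    (Real.sqrt (∑ kl ∈ w.p.support, (kl.1 : ℝ) ^ 2 * w.p kl) *
      Real.sqrt (∑ kl ∈ w.p.support, (kl.2 : ℝ) ^ 2 * w.p kl)))

/-- The quantity `√( Σ p_{k,ℓ}(k-ℓ)² / Σ p_{k,ℓ}(k+ℓ)² )`. -/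
noncomputable def QuadrantWalk.slope (w : QuadrantWalk) : ℝ :=
  Real.sqrt ((∑ kl ∈ w.p.support, ((kl.1 : ℝ) - (kl.2 : ℝ)) ^ 2 * w.p kl) /
    (∑ kl ∈ w.p.support, ((kl.1 : ℝ) + (kl.2 : ℝ)) ^ 2 * w.p kl))


namespace SW

def m (kl : ℤ × ℤ) : ℕ := (1 - kl.1).toNat + (1 - kl.2).toNat

noncomputable def c (kl : ℤ × ℤ) : ℝ := (kl.2 : ℝ) - (kl.1 : ℝ)

noncomputable def F (w : QuadrantWalk) (z lam : ℝ) : ℝ :=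
  z ^ 2 - ∑ kl ∈ w.p.support, w.p kl * z ^ m kl * Real.cos (c kl * lam)

noncomputable def a2 (w : QuadrantWalk) : ℝ :=
  ∑ kl ∈ w.p.support, ((kl.1 : ℝ) + (kl.2 : ℝ)) ^ 2 * w.p kl

noncomputable def d2 (w : QuadrantWalk) : ℝ :=
  ∑ kl ∈ w.p.support, ((kl.1 : ℝ) - (kl.2 : ℝ)) ^ 2 * w.p kl

variable (w : QuadrantWalk)

lemma bdd {kl : ℤ × ℤ} (h : kl ∈ w.p.support) : kl.1 ≤ 1 ∧ kl.2 ≤ 1 := by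
  rw [Finsupp.mem_support_iff] at h
  constructor
  · by_contra hk
    exact h (by rw [show kl = (kl.1, kl.2) from rfl] at *; exact w.small _ _ (Or.inl (by omega)))
  · by_contra hk
    exact h (by rw [show kl = (kl.1, kl.2) from rfl] at *; exact w.small _ _ (Or.inr (by omega)))

lemma m_cast {kl : ℤ × ℤ} (h : kl ∈ w.p.support) :
    (m kl : ℝ) = 2 - (kl.1 : ℝ) - (kl.2 : ℝ) := by
  obtain ⟨h1, h2⟩ := bdd w h
  have e1 : ((1 - kl.1).toNat : ℤ) = 1 - kl.1 := Int.toNat_of_nonneg (by omega)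
  have e2 : ((1 - kl.2).toNat : ℤ) = 1 - kl.2 := Int.toNat_of_nonneg (by omega)
  have : ((m kl : ℤ) : ℝ) = ((2 - kl.1 - kl.2 : ℤ) : ℝ) := by
    congr 1; simp only [m, Nat.cast_add, e1, e2]; ring
  push_cast at this ⊢; linarith [this]

lemma sum_swap {M : Type*} [AddCommMonoid M] (f : ℤ × ℤ → M) :
    ∑ kl ∈ w.p.support, f kl = ∑ kl ∈ w.p.support, f kl.swap := by
  apply Finset.sum_nbij' (fun kl => kl.swap) (fun kl => kl.swap) <;>
    simp only [Finsupp.mem_support_iff, Prod.forall, Prod.swap_prod_mk, Prod.mk.injEq] <;>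
    intro a b h <;>
    first
      | (rw [w.symm b a]; exact h)
      | (rw [w.symm a b]; exact h)
      | simp

lemma M1 : ∑ kl ∈ w.p.support, w.p kl * (m kl : ℝ) = 2 := by
  have : ∑ kl ∈ w.p.support, w.p kl * (m kl : ℝ)
      = ∑ kl ∈ w.p.support, (2 * w.p kl - (kl.1 : ℝ) * w.p kl - (kl.2 : ℝ) * w.p kl) := by
    refine Finset.sum_congr rfl fun kl h => ?_
    rw [m_cast w h]; ring
  rw [this, Finset.sum_sub_distrib, Finset.sum_sub_distrib, ← Finset.mul_sum,
    w.sum_one, w.drift1, w.drift2]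
  ring

lemma Msigma : ∑ kl ∈ w.p.support, w.p kl * ((kl.1 : ℝ) + (kl.2 : ℝ)) = 0 := by
  have : ∑ kl ∈ w.p.support, w.p kl * ((kl.1 : ℝ) + (kl.2 : ℝ))
      = ∑ kl ∈ w.p.support, ((kl.1 : ℝ) * w.p kl + (kl.2 : ℝ) * w.p kl) := by
    refine Finset.sum_congr rfl fun kl h => by ring
  rw [this, Finset.sum_add_distrib, w.drift1, w.drift2]; ring

lemma M2 : ∑ kl ∈ w.p.support, w.p kl * ((m kl : ℝ) * ((m kl : ℝ) - 1)) = 2 + a2 w := by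
  have : ∑ kl ∈ w.p.support, w.p kl * ((m kl : ℝ) * ((m kl : ℝ) - 1))
      = ∑ kl ∈ w.p.support, (2 * w.p kl - 3 * (w.p kl * ((kl.1 : ℝ) + (kl.2 : ℝ)))
          + ((kl.1 : ℝ) + (kl.2 : ℝ)) ^ 2 * w.p kl) := by
    refine Finset.sum_congr rfl fun kl h => ?_
    rw [m_cast w h]; ring
  rw [this]
  simp only [Finset.sum_add_distrib, Finset.sum_sub_distrib, ← Finset.mul_sum,
    w.sum_one, Msigma w]
  unfold a2; ring

lemma M3 : ∑ kl ∈ w.p.support, w.p kl * (c kl) ^ 2 = d2 w := by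
  unfold c d2
  refine Finset.sum_congr rfl fun kl h => ?_
  ring

end SW

namespace SW
variable (w : QuadrantWalk)

lemma a2_nonneg : 0 ≤ a2 w :=
  Finset.sum_nonneg fun kl _ => mul_nonneg (sq_nonneg _) (w.nonneg kl)

lemma d2_nonneg : 0 ≤ d2 w :=
  Finset.sum_nonneg fun kl _ => mul_nonneg (sq_nonneg _) (w.nonneg kl)

lemma sum_one_c : ∑ kl ∈ w.p.support, (w.p kl : ℂ) = 1 := by
  have h := w.sum_one
  have : ((∑ kl ∈ w.p.support, w.p kl : ℝ) : ℂ) = 1 := by rw [h]; norm_num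
  simpa using this

lemma a2_pos : 0 < a2 w := by
  rcases lt_or_eq_of_le (a2_nonneg w) with h | h
  · exact h
  exfalso
  have hz : ∀ kl ∈ w.p.support, kl.1 + kl.2 = 0 := by
    intro kl hkl
    have := (Finset.sum_eq_zero_iff_of_nonneg
      (fun kl _ => mul_nonneg (sq_nonneg ((kl.1:ℝ)+(kl.2:ℝ))) (w.nonneg kl))).1 h.symm kl hkl
    rcases mul_eq_zero.1 this with h1 | h1
    · have : ((kl.1 : ℝ) + kl.2) = 0 := sq_eq_zero_iff.1 h1
      exact_mod_cast (by push_cast at this ⊢; linarith : ((kl.1 + kl.2 : ℤ) : ℝ) = 0)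
    · exact absurd h1 (Finsupp.mem_support_iff.1 hkl)
  have hsum : (∑ kl ∈ w.p.support, (w.p kl : ℂ) * (-1 : ℂ) ^ kl.1 * (-1 : ℂ) ^ kl.2) = 1 := by
    have : ∑ kl ∈ w.p.support, (w.p kl : ℂ) * (-1 : ℂ) ^ kl.1 * (-1 : ℂ) ^ kl.2
        = ∑ kl ∈ w.p.support, (w.p kl : ℂ) := by
      refine Finset.sum_congr rfl fun kl hkl => ?_
      rw [mul_assoc, ← zpow_add₀ (by norm_num : (-1 : ℂ) ≠ 0), hz kl hkl]
      simp
    rw [this, sum_one_c w]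
  have := (w.irred (-1) (-1) (by simp) (by simp) (by rw [hsum]; simp)).1
  norm_num at this

lemma d2_pos : 0 < d2 w := by
  rcases lt_or_eq_of_le (d2_nonneg w) with h | h
  · exact h
  exfalso
  have hz : ∀ kl ∈ w.p.support, kl.1 = kl.2 := by
    intro kl hkl
    have := (Finset.sum_eq_zero_iff_of_nonneg
      (fun kl _ => mul_nonneg (sq_nonneg ((kl.1:ℝ)-(kl.2:ℝ))) (w.nonneg kl))).1 h.symm kl hkl
    rcases mul_eq_zero.1 this with h1 | h1
    · have : ((kl.1 : ℝ) - kl.2) = 0 := sq_eq_zero_iff.1 h1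
      exact_mod_cast (by push_cast at this ⊢; linarith : ((kl.1 : ℤ) : ℝ) = ((kl.2 : ℤ) : ℝ))
    · exact absurd h1 (Finsupp.mem_support_iff.1 hkl)
  have hsum : (∑ kl ∈ w.p.support, (w.p kl : ℂ) * (I : ℂ) ^ kl.1 * (-I : ℂ) ^ kl.2) = 1 := by
    have : ∑ kl ∈ w.p.support, (w.p kl : ℂ) * (I : ℂ) ^ kl.1 * (-I : ℂ) ^ kl.2
        = ∑ kl ∈ w.p.support, (w.p kl : ℂ) := by
      refine Finset.sum_congr rfl fun kl hkl => ?_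
      rw [mul_assoc, ← hz kl hkl, ← mul_zpow]
      simp
    rw [this, sum_one_c w]
  have := (w.irred I (-I) (by simp) (by simp) (by rw [hsum]; simp)).1
  simp [Complex.ext_iff] at this

lemma slope_eq : w.slope = Real.sqrt (d2 w / a2 w) := rfl

lemma slope_sq : (w.slope) ^ 2 = d2 w / a2 w := by
  rw [slope_eq, Real.sq_sqrt (div_nonneg (d2_nonneg w) (le_of_lt (a2_pos w)))]

lemma slope_pos : 0 < w.slope := by
  rw [slope_eq]
  exact Real.sqrt_pos.2 (div_pos (d2_pos w) (a2_pos w))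

/-- The bridge lemma: on the diagonal `(z e^{iλ}, z e^{-iλ})` (z real) the kernel is
the real quantity `F z λ`. -/
lemma K_eq_F (z lam : ℝ) :
    w.K ((z : ℂ) * Complex.exp (Complex.I * lam))
      ((z : ℂ) * (Complex.exp (Complex.I * lam))⁻¹) = (F w z lam : ℂ) := by
  set s : ℂ := Complex.exp (Complex.I * lam) with hs
  have hsne : s ≠ 0 := Complex.exp_ne_zero _
  -- rewrite each summand
  have hterm : ∀ kl : ℤ × ℤ, kl ∈ w.p.support →
      (w.p kl : ℂ) * ((z : ℂ) * s) ^ (1 - kl.1).toNat * ((z : ℂ) * s⁻¹) ^ (1 - kl.2).toNat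
        = (w.p kl : ℂ) * (z : ℂ) ^ m kl * s ^ ((kl.2 : ℤ) - kl.1) := by
    intro kl hkl
    obtain ⟨h1, h2⟩ := bdd w hkl
    set n1 := (1 - kl.1).toNat
    set n2 := (1 - kl.2).toNat
    have e1 : ((n1 : ℤ)) = 1 - kl.1 := Int.toNat_of_nonneg (by omega)
    have e2 : ((n2 : ℤ)) = 1 - kl.2 := Int.toNat_of_nonneg (by omega)
    have key : ((z : ℂ) * s) ^ n1 * ((z : ℂ) * s⁻¹) ^ n2
        = (z : ℂ) ^ (n1 + n2) * (s ^ (n1 : ℤ) * s ^ (-(n2 : ℤ))) := by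
      rw [zpow_natCast, zpow_neg, zpow_natCast]
      ring
    rw [mul_assoc, key, ← zpow_add₀ hsne]
    have : (n1 : ℤ) + (-(n2 : ℤ)) = kl.2 - kl.1 := by omega
    rw [this, show n1 + n2 = m kl from rfl]
    ring
  -- the symmetrized sum identity
  have hsym : ∑ kl ∈ w.p.support, (w.p kl : ℂ) * (z : ℂ) ^ m kl * s ^ ((kl.2 : ℤ) - kl.1)
      = ∑ kl ∈ w.p.support, ((w.p kl * z ^ m kl * Real.cos (c kl * lam) : ℝ) : ℂ) := by
    have hswap := sum_swap w (fun kl => (w.p kl : ℂ) * (z : ℂ) ^ m kl * s ^ ((kl.2 : ℤ) - kl.1))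
    have hsw : ∑ kl ∈ w.p.support,
          ((fun kl : ℤ × ℤ => (w.p kl : ℂ) * (z : ℂ) ^ m kl * s ^ ((kl.2 : ℤ) - kl.1)) kl.swap)
        = ∑ kl ∈ w.p.support, (w.p kl : ℂ) * (z : ℂ) ^ m kl * s ^ ((kl.1 : ℤ) - kl.2) := by
      refine Finset.sum_congr rfl fun kl hkl => ?_
      have hp : w.p kl.swap = w.p kl := by
        rw [show kl.swap = (kl.2, kl.1) from rfl, w.symm kl.2 kl.1]
      simp only [Prod.fst_swap, Prod.snd_swap, hp, show m kl.swap = m kl from Nat.add_comm _ _]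
    apply mul_left_cancel₀ (two_ne_zero' ℂ)
    rw [Finset.mul_sum, Finset.mul_sum]
    calc ∑ kl ∈ w.p.support, 2 * ((w.p kl : ℂ) * (z : ℂ) ^ m kl * s ^ ((kl.2 : ℤ) - kl.1))
        = ∑ kl ∈ w.p.support, ((w.p kl : ℂ) * (z : ℂ) ^ m kl * s ^ ((kl.2 : ℤ) - kl.1)
            + (w.p kl : ℂ) * (z : ℂ) ^ m kl * s ^ ((kl.1 : ℤ) - kl.2)) := by
          rw [Finset.sum_add_distrib, ← hsw, ← hswap]
          rw [Finset.sum_add_distrib.symm]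
          refine Finset.sum_congr rfl fun kl hkl => by ring
      _ = ∑ kl ∈ w.p.support, 2 * ((w.p kl * z ^ m kl * Real.cos (c kl * lam) : ℝ) : ℂ) := by
          refine Finset.sum_congr rfl fun kl hkl => ?_
          have he : ∀ n : ℤ, s ^ n = Complex.exp (((n * lam : ℝ) : ℂ) * Complex.I) := by
            intro n
            rw [hs, ← Complex.exp_int_mul]
            congr 1
            push_cast
            ring
          have : ((((kl.1 : ℤ) - kl.2 : ℤ) * lam : ℝ) : ℂ) = -((((kl.2 : ℤ) - kl.1 : ℤ) * lam : ℝ) : ℂ) := by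
            push_cast; ring
          have hc : ((Real.cos (c kl * lam) : ℝ) : ℂ)
              = Complex.cos ((((kl.2 : ℤ) - kl.1 : ℤ) * lam : ℝ) : ℂ) := by
            rw [Complex.ofReal_cos]
            congr 1
            unfold c
            push_cast
            ring
          rw [he ((kl.2 : ℤ) - kl.1), he ((kl.1 : ℤ) - kl.2), this]
          have hcos := Complex.two_cos (x := ((((kl.2 : ℤ) - kl.1 : ℤ) * lam : ℝ) : ℂ))
          push_cast [hc]
          push_cast at hcos
          linear_combination (-(w.p kl : ℂ) * (z : ℂ) ^ m kl) * hcos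
  -- put it together
  unfold QuadrantWalk.K F
  push_cast
  rw [show ∀ A B : ℂ, A - B = A - B from fun _ _ => rfl]
  have hfirst : (z : ℂ) * s * ((z : ℂ) * s⁻¹) = (z : ℂ) ^ 2 := by
    field_simp
  rw [hfirst]
  congr 1
  rw [show ∑ kl ∈ w.p.support, (w.p kl : ℂ) * ((z:ℂ) * s) ^ (1 - kl.1).toNat * ((z:ℂ) * s⁻¹) ^ (1 - kl.2).toNat
      = ∑ kl ∈ w.p.support, (w.p kl : ℂ) * (z : ℂ) ^ m kl * s ^ ((kl.2 : ℤ) - kl.1) from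
    Finset.sum_congr rfl hterm, hsym]
  push_cast
  rfl

end SW

namespace SW
variable (w : QuadrantWalk)

/-- derivative of `λ ↦ F (1+tλ) λ`. -/
noncomputable def Fd (w : QuadrantWalk) (t lam : ℝ) : ℝ :=
  2 * t * (1 + t * lam) - ∑ kl ∈ w.p.support,
    w.p kl * ((m kl : ℝ) * t * (1 + t * lam) ^ (m kl - 1) * Real.cos (c kl * lam)
      - c kl * (1 + t * lam) ^ (m kl) * Real.sin (c kl * lam))

lemma hasDerivAt_phi (t lam : ℝ) :
    HasDerivAt (fun x => F w (1 + t * x) x) (Fd w t lam) lam := by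
  have hz : HasDerivAt (fun x : ℝ => 1 + t * x) t lam := by
    simpa using ((hasDerivAt_id lam).const_mul t).const_add 1
  have hterm : ∀ kl ∈ w.p.support,
      HasDerivAt (fun x => w.p kl * (1 + t * x) ^ m kl * Real.cos (c kl * x))
        (w.p kl * ((m kl : ℝ) * t * (1 + t * lam) ^ (m kl - 1) * Real.cos (c kl * lam)
          - c kl * (1 + t * lam) ^ (m kl) * Real.sin (c kl * lam))) lam := by
    intro kl _
    have hcos : HasDerivAt (fun x => Real.cos (c kl * x)) (-Real.sin (c kl * lam) * c kl) lam := by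
      simpa [Function.comp_def] using (Real.hasDerivAt_cos (c kl * lam)).comp lam ((hasDerivAt_id lam).const_mul (c kl))
    have h1 := ((hz.fun_pow (m kl)).const_mul (w.p kl)).mul hcos
    refine h1.congr_deriv ?_
    ring
  have hsum := HasDerivAt.fun_sum hterm
  have h2 := hz.pow 2
  have hfin := h2.fun_sub hsum
  have : (fun x => F w (1 + t * x) x)
      = fun x => (1 + t * x) ^ 2 - ∑ kl ∈ w.p.support,
          w.p kl * (1 + t * x) ^ m kl * Real.cos (c kl * x) := rfl
  rw [this]
  refine hfin.congr_deriv ?_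
  unfold Fd
  push_cast
  ring

lemma mm1 (n : ℕ) : ((n - 1 : ℕ) : ℝ) * (n : ℝ) = (n : ℝ) * ((n : ℝ) - 1) := by
  cases n with
  | zero => simp
  | succ k => push_cast; ring

lemma hasDerivAt_Fd (t : ℝ) :
    HasDerivAt (Fd w t) (d2 w - a2 w * t ^ 2) 0 := by
  have hz : HasDerivAt (fun x : ℝ => 1 + t * x) t 0 := by
    simpa using ((hasDerivAt_id (0:ℝ)).const_mul t).const_add 1
  have hcos : ∀ b : ℝ, HasDerivAt (fun x => Real.cos (b * x)) 0 (0:ℝ) := by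
    intro b
    have := (Real.hasDerivAt_cos (b * 0)).comp (0:ℝ) ((hasDerivAt_id (0:ℝ)).const_mul b)
    simpa [Function.comp_def] using this
  have hsin : ∀ b : ℝ, HasDerivAt (fun x => Real.sin (b * x)) b (0:ℝ) := by
    intro b
    have := (Real.hasDerivAt_sin (b * 0)).comp (0:ℝ) ((hasDerivAt_id (0:ℝ)).const_mul b)
    simpa [Function.comp_def] using this
  have hterm : ∀ kl ∈ w.p.support,
      HasDerivAt (fun x => w.p kl * ((m kl : ℝ) * t * (1 + t * x) ^ (m kl - 1) * Real.cos (c kl * x)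
          - c kl * (1 + t * x) ^ (m kl) * Real.sin (c kl * x)))
        (w.p kl * ((m kl : ℝ) * ((m kl - 1 : ℕ) : ℝ) * t ^ 2 - (c kl) ^ 2)) 0 := by
    intro kl _
    have hE1 : HasDerivAt
        (fun x => (m kl : ℝ) * t * (1 + t * x) ^ (m kl - 1) * Real.cos (c kl * x))
        ((m kl : ℝ) * ((m kl - 1 : ℕ) : ℝ) * t ^ 2) 0 := by
      have := ((hz.pow (m kl - 1)).const_mul ((m kl : ℝ) * t)).mul (hcos (c kl))
      refine this.congr_deriv ?_
      simp
      try ring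
    have hE2 : HasDerivAt
        (fun x => c kl * (1 + t * x) ^ (m kl) * Real.sin (c kl * x)) ((c kl) ^ 2) 0 := by
      have := ((hz.pow (m kl)).const_mul (c kl)).mul (hsin (c kl))
      refine this.congr_deriv ?_
      simp
      try ring
    have := (hE1.fun_sub hE2).const_mul (w.p kl)
    convert this using 1
    try ring
  have hsum := HasDerivAt.fun_sum hterm
  have h1 : HasDerivAt (fun x : ℝ => 2 * t * (1 + t * x)) (2 * t ^ 2) 0 := by
    have := hz.const_mul (2 * t)
    refine this.congr_deriv ?_
    ring
  have hfin := h1.fun_sub hsum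
  have hval : 2 * t ^ 2 - ∑ kl ∈ w.p.support,
      w.p kl * ((m kl : ℝ) * ((m kl - 1 : ℕ) : ℝ) * t ^ 2 - (c kl) ^ 2)
      = d2 w - a2 w * t ^ 2 := by
    have hsplit : ∑ kl ∈ w.p.support,
        w.p kl * ((m kl : ℝ) * ((m kl - 1 : ℕ) : ℝ) * t ^ 2 - (c kl) ^ 2)
        = (∑ kl ∈ w.p.support, w.p kl * ((m kl : ℝ) * ((m kl : ℝ) - 1))) * t ^ 2
          - ∑ kl ∈ w.p.support, w.p kl * (c kl) ^ 2 := by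
      rw [Finset.sum_mul, ← Finset.sum_sub_distrib]
      refine Finset.sum_congr rfl fun kl _ => ?_
      rw [show (m kl : ℝ) * ((m kl - 1 : ℕ) : ℝ) = ((m kl - 1 : ℕ) : ℝ) * (m kl : ℝ) from by ring,
        mm1]
      ring
    rw [hsplit, M2, M3]
    ring
  rw [← hval]
  exact hfin

lemma F_one_zero : F w 1 0 = 0 := by
  unfold F
  simp [w.sum_one]

lemma Fd_zero (t : ℝ) : Fd w t 0 = 0 := by
  unfold Fd
  have : ∑ kl ∈ w.p.support,
      w.p kl * ((m kl : ℝ) * t * (1 + t * 0) ^ (m kl - 1) * Real.cos (c kl * 0)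
        - c kl * (1 + t * 0) ^ (m kl) * Real.sin (c kl * 0))
      = ∑ kl ∈ w.p.support, w.p kl * (m kl : ℝ) * t := by
    refine Finset.sum_congr rfl fun kl _ => by simp; ring
  rw [this, ← Finset.sum_mul, M1]
  ring

end SW

namespace SW
variable (w : QuadrantWalk)

lemma F_abs (z lam : ℝ) : F w z |lam| = F w z lam := by
  unfold F
  congr 1
  refine Finset.sum_congr rfl fun kl _ => ?_
  rcases abs_choice lam with h | h
  · rw [h]
  · rw [h, mul_neg, Real.cos_neg]

lemma key_right (t : ℝ) :
    Tendsto (fun lam => F w (1 + t * lam) lam / lam ^ 2) (𝓝[>] (0:ℝ))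
      (𝓝 ((d2 w - a2 w * t ^ 2) / 2)) := by
  have hphi : ∀ x : ℝ, HasDerivAt (fun y => F w (1 + t * y) y) (Fd w t x) x :=
    fun x => hasDerivAt_phi w t x
  have hg : ∀ x : ℝ, HasDerivAt (fun y : ℝ => y ^ 2) (2 * x) x := by
    intro x; simpa using hasDerivAt_pow 2 x
  have hslope : Tendsto (fun x => Fd w t x / x) (𝓝[≠] (0:ℝ))
      (𝓝 (d2 w - a2 w * t ^ 2)) := by
    have h := hasDerivAt_iff_tendsto_slope.1 (hasDerivAt_Fd w t)
    refine h.congr' ?_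
    filter_upwards [self_mem_nhdsWithin] with x hx
    rw [slope_def_field, Fd_zero]
    simp
  have hdiv : Tendsto (fun x => Fd w t x / (2 * x)) (𝓝[>] (0:ℝ))
      (𝓝 ((d2 w - a2 w * t ^ 2) / 2)) := by
    have : (fun x => Fd w t x / (2 * x)) = fun x => (Fd w t x / x) / 2 := by
      funext x; rw [div_div, mul_comm]
    rw [this]
    exact (hslope.mono_left (nhdsWithin_mono _ fun x hx => ne_of_gt hx)).div_const 2
  refine HasDerivAt.lhopital_zero_nhdsGT
    (Filter.Eventually.of_forall fun x => hphi x)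
    (Filter.Eventually.of_forall fun x => hg x) ?_ ?_ ?_ hdiv
  · filter_upwards [self_mem_nhdsWithin] with x hx
    have : (0:ℝ) < x := hx
    positivity
  · have hc : Tendsto (fun y => F w (1 + t * y) y) (𝓝 (0:ℝ)) (𝓝 (F w (1 + t * 0) 0)) :=
      (hphi 0).continuousAt.tendsto
    rw [show F w (1 + t * 0) 0 = 0 from by rw [show (1 : ℝ) + t * 0 = 1 from by ring]; exact F_one_zero w] at hc
    exact hc.mono_left nhdsWithin_le_nhds
  · have : Tendsto (fun y : ℝ => y ^ 2) (𝓝 (0:ℝ)) (𝓝 ((0:ℝ) ^ 2)) :=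
      (continuous_pow 2).tendsto 0
    simpa using this.mono_left nhdsWithin_le_nhds

lemma key (t : ℝ) :
    Tendsto (fun lam => F w (1 + t * |lam|) lam / lam ^ 2) (𝓝[≠] (0:ℝ))
      (𝓝 ((d2 w - a2 w * t ^ 2) / 2)) := by
  have h := (key_right w t).comp tendsto_abs_nhdsNE_zero
  refine h.congr fun lam => ?_
  simp only [Function.comp_apply]
  rw [F_abs, _root_.sq_abs]

lemma ev_neg (t : ℝ) (hL : d2 w - a2 w * t ^ 2 < 0) :
    ∀ᶠ lam in 𝓝[≠] (0:ℝ), F w (1 + t * |lam|) lam < 0 := by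
  have h := (key w t).eventually_lt_const (by linarith : (d2 w - a2 w * t ^ 2) / 2 < 0)
  filter_upwards [h, self_mem_nhdsWithin] with lam h1 h2
  have hlam : lam ≠ 0 := h2
  have hsq : (0:ℝ) < lam ^ 2 := by positivity
  have := mul_neg_of_neg_of_pos h1 hsq
  rwa [div_mul_cancel₀ _ (ne_of_gt hsq)] at this

lemma ev_pos (t : ℝ) (hL : 0 < d2 w - a2 w * t ^ 2) :
    ∀ᶠ lam in 𝓝[≠] (0:ℝ), 0 < F w (1 + t * |lam|) lam := by
  have h := (key w t).eventually_const_lt (by linarith : (0:ℝ) < (d2 w - a2 w * t ^ 2) / 2)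
  filter_upwards [h, self_mem_nhdsWithin] with lam h1 h2
  have hlam : lam ≠ 0 := h2
  have hsq : (0:ℝ) < lam ^ 2 := by positivity
  have := mul_pos h1 hsq
  rwa [div_mul_cancel₀ _ (ne_of_gt hsq)] at this

end SW

namespace SW
variable (w : QuadrantWalk)

lemma abs_exp_I_mul (lam : ℝ) : ‖Complex.exp (Complex.I * lam)‖ = 1 := by
  rw [Complex.norm_exp]
  simp

lemma root_eq_eta (η : ℂ → ℝ)
    (hη0 : w.p (1, 1) = 0 → ∀ s : ℂ, ‖s‖ = 1 →
      η s ∈ Set.Icc (-1 : ℝ) 1 ∧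
      (∀ z : ℂ, ‖z‖ ≤ 1 →
        (w.K (z * s) (z * s⁻¹) = 0 ↔ z = 0 ∨ z = (η s : ℂ))))
    (hη1 : w.p (1, 1) ≠ 0 → ∀ s : ℂ, ‖s‖ = 1 →
      0 < η s ∧ η s ≤ 1 ∧ w.K ((η s : ℂ) * s) ((η s : ℂ) * s⁻¹) = 0 ∧
      (∀ z : ℝ, 0 < z → z ≤ 1 →
        w.K ((z : ℂ) * s) ((z : ℂ) * s⁻¹) = 0 → z = η s))
    (z lam : ℝ) (hz0 : 0 < z) (hz1 : z < 1) (hF : F w z lam = 0) :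
    z = η (Complex.exp (Complex.I * lam)) := by
  set s : ℂ := Complex.exp (Complex.I * lam) with hs
  have hK : w.K ((z : ℂ) * s) ((z : ℂ) * s⁻¹) = 0 := by
    rw [K_eq_F w z lam, hF]
    norm_num
  by_cases hp : w.p (1, 1) = 0
  · obtain ⟨_, hiff⟩ := hη0 hp s (abs_exp_I_mul lam)
    have hzabs : ‖(z : ℂ)‖ ≤ 1 := by
      rw [Complex.norm_real, Real.norm_eq_abs, abs_of_pos hz0]
      linarith
    rcases (hiff (z : ℂ) hzabs).1 hK with h | h
    · exact absurd (Complex.ofReal_eq_zero.1 h) (ne_of_gt hz0)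
    · exact Complex.ofReal_inj.1 h
  · exact (hη1 hp s (abs_exp_I_mul lam)).2.2.2 z hz0 (le_of_lt hz1) hK

lemma main (η : ℂ → ℝ)
    (hη0 : w.p (1, 1) = 0 → ∀ s : ℂ, ‖s‖ = 1 →
      η s ∈ Set.Icc (-1 : ℝ) 1 ∧
      (∀ z : ℂ, ‖z‖ ≤ 1 →
        (w.K (z * s) (z * s⁻¹) = 0 ↔ z = 0 ∨ z = (η s : ℂ))))
    (hη1 : w.p (1, 1) ≠ 0 → ∀ s : ℂ, ‖s‖ = 1 →
      0 < η s ∧ η s ≤ 1 ∧ w.K ((η s : ℂ) * s) ((η s : ℂ) * s⁻¹) = 0 ∧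
      (∀ z : ℝ, 0 < z → z ≤ 1 →
        w.K ((z : ℂ) * s) ((z : ℂ) * s⁻¹) = 0 → z = η s)) :
    Tendsto (fun lam : ℝ => (1 - η (Complex.exp (Complex.I * lam))) / |lam|)
      (𝓝[≠] (0:ℝ)) (𝓝 w.slope) := by
  set r := w.slope with hr
  rw [Metric.tendsto_nhds]
  intro ε hε
  have hrpos : 0 < r := slope_pos w
  set ε' := min (ε / 2) (r / 2) with hε'def
  have hε'pos : 0 < ε' := lt_min (by linarith) (by linarith)
  have hε'r : ε' ≤ r / 2 := min_le_right _ _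
  have hε'ε : ε' < ε := lt_of_le_of_lt (min_le_left _ _) (by linarith)
  have hr2 : a2 w * r ^ 2 = d2 w := by
    rw [hr, slope_sq]
    field_simp
    linear_combination (d2 w) * mul_inv_cancel₀ (ne_of_gt (a2_pos w))
  have hneg : d2 w - a2 w * (-(r + ε')) ^ 2 < 0 := by nlinarith [a2_pos w, mul_pos (a2_pos w) (mul_pos hrpos hε'pos), mul_pos (a2_pos w) (mul_pos hε'pos hε'pos)]
  have hpos : 0 < d2 w - a2 w * (-(r - ε')) ^ 2 := by nlinarith [a2_pos w, mul_pos (a2_pos w) (mul_pos hε'pos (by linarith : (0:ℝ) < 2 * r - ε'))]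
  have E1 := ev_neg w (-(r + ε')) hneg
  have E2 := ev_pos w (-(r - ε')) hpos
  have E3 : ∀ᶠ lam in 𝓝[≠] (0:ℝ), (r + ε') * |lam| < 1 := by
    have h0 : Tendsto (fun lam : ℝ => (r + ε') * |lam|) (𝓝 (0:ℝ)) (𝓝 ((r + ε') * |(0:ℝ)|)) :=
      (continuous_const.mul _root_.continuous_abs).tendsto 0
    have h0' : Tendsto (fun lam : ℝ => (r + ε') * |lam|) (𝓝[≠] (0:ℝ)) (𝓝 0) := by
      simpa using h0.mono_left nhdsWithin_le_nhds
    exact h0'.eventually_lt_const (by norm_num : (0:ℝ) < 1)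
  filter_upwards [E1, E2, E3, self_mem_nhdsWithin] with lam h1 h2 h3 hne'
  have hne : lam ≠ 0 := hne'
  have habs : 0 < |lam| := abs_pos.2 hne
  set lo := 1 + (-(r + ε')) * |lam| with hlo
  set hi := 1 + (-(r - ε')) * |lam| with hhi
  have hlohi : lo ≤ hi := by nlinarith
  have hlopos : 0 < lo := by nlinarith
  have hhilt : hi < 1 := by nlinarith
  have hcont : ContinuousOn (fun z => F w z lam) (Icc lo hi) := by
    apply Continuous.continuousOn
    exact (continuous_pow 2).sub (continuous_finset_sum _ fun kl _ =>
      (continuous_const.mul (continuous_pow (m kl))).mul continuous_const)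
  have hIVT := intermediate_value_Icc hlohi hcont
  have h0mem : (0:ℝ) ∈ Icc (F w lo lam) (F w hi lam) := ⟨le_of_lt h1, le_of_lt h2⟩
  obtain ⟨z, hzmem, hz0⟩ := hIVT h0mem
  have hzeta := root_eq_eta w η hη0 hη1 z lam (lt_of_lt_of_le hlopos hzmem.1)
    (lt_of_le_of_lt hzmem.2 hhilt) hz0
  rw [Real.dist_eq, ← hzeta]
  have hub : (1 - z) / |lam| ≤ r + ε' := by
    rw [div_le_iff₀ habs]
    nlinarith [hzmem.1]
  have hlb : r - ε' ≤ (1 - z) / |lam| := by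
    rw [le_div_iff₀ habs]
    nlinarith [hzmem.2]
  have : |(1 - z) / |lam| - r| ≤ ε' := abs_le.2 ⟨by linarith, by linarith⟩
  linarith

end SW

namespace SW
variable (w : QuadrantWalk)

lemma tendsto_exp_slope :
    Tendsto (fun lam : ℝ => (Complex.exp (Complex.I * lam) - 1) / (lam : ℂ))
      (𝓝[≠] (0:ℝ)) (𝓝 Complex.I) := by
  have h1 : HasDerivAt (fun z : ℂ => Complex.exp (Complex.I * z))
      (Complex.exp (Complex.I * 0) * (Complex.I * 1)) 0 := by
    have := HasDerivAt.comp (0:ℂ) (Complex.hasDerivAt_exp (Complex.I * 0))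
      ((hasDerivAt_id (0:ℂ)).const_mul Complex.I)
    simpa [Function.comp_def] using this
  have hde : HasDerivAt (fun y : ℝ => Complex.exp (Complex.I * y)) Complex.I 0 := by
    have h2 := h1.comp_ofReal (z := 0)
    simpa using h2
  have hslope := hasDerivAt_iff_tendsto_slope.1 hde
  refine Filter.Tendsto.congr' ?_ hslope
  filter_upwards [self_mem_nhdsWithin] with lam hlam
  rw [slope_def_module]
  simp only [sub_zero, Complex.ofReal_zero, mul_zero, Complex.exp_zero]
  rw [Complex.real_smul, Complex.ofReal_inv, div_eq_inv_mul]

lemma pswap (kl : ℤ × ℤ) : w.p kl.swap = w.p kl := by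
  rw [show kl.swap = (kl.2, kl.1) from rfl, w.symm kl.2 kl.1]

lemma sumA_swap :
    ∑ kl ∈ w.p.support, (kl.2 : ℝ) ^ 2 * w.p kl
      = ∑ kl ∈ w.p.support, (kl.1 : ℝ) ^ 2 * w.p kl := by
  have := sum_swap w (fun kl => (kl.2 : ℝ) ^ 2 * w.p kl)
  rw [this]
  refine Finset.sum_congr rfl fun kl _ => ?_
  rw [pswap]
  simp

lemma sumA_pos : 0 < ∑ kl ∈ w.p.support, (kl.1 : ℝ) ^ 2 * w.p kl := by
  have h4 : a2 w + d2 w = 4 * ∑ kl ∈ w.p.support, (kl.1 : ℝ) ^ 2 * w.p kl := by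
    unfold a2 d2
    rw [← Finset.sum_add_distrib]
    have := sumA_swap w
    calc ∑ kl ∈ w.p.support, (((kl.1:ℝ) + kl.2) ^ 2 * w.p kl + ((kl.1:ℝ) - kl.2) ^ 2 * w.p kl)
        = ∑ kl ∈ w.p.support, (2 * ((kl.1:ℝ) ^ 2 * w.p kl) + 2 * ((kl.2:ℝ) ^ 2 * w.p kl)) := by
          refine Finset.sum_congr rfl fun kl _ => by ring
      _ = 4 * ∑ kl ∈ w.p.support, (kl.1 : ℝ) ^ 2 * w.p kl := by
          rw [Finset.sum_add_distrib, ← Finset.mul_sum, ← Finset.mul_sum, sumA_swap w]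
          ring
  nlinarith [a2_pos w, d2_pos w]

lemma d2_eq : d2 w = 2 * (∑ kl ∈ w.p.support, (kl.1 : ℝ) ^ 2 * w.p kl)
    - 2 * ∑ kl ∈ w.p.support, (kl.1 : ℝ) * (kl.2 : ℝ) * w.p kl := by
  unfold d2
  calc ∑ kl ∈ w.p.support, ((kl.1:ℝ) - kl.2) ^ 2 * w.p kl
      = ∑ kl ∈ w.p.support, ((kl.1:ℝ) ^ 2 * w.p kl + (kl.2:ℝ) ^ 2 * w.p kl
          - 2 * ((kl.1:ℝ) * (kl.2:ℝ) * w.p kl)) := by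
        refine Finset.sum_congr rfl fun kl _ => by ring
    _ = _ := by
        rw [Finset.sum_sub_distrib, Finset.sum_add_distrib, sumA_swap w, ← Finset.mul_sum]
        ring

lemma a2_eq : a2 w = 2 * (∑ kl ∈ w.p.support, (kl.1 : ℝ) ^ 2 * w.p kl)
    + 2 * ∑ kl ∈ w.p.support, (kl.1 : ℝ) * (kl.2 : ℝ) * w.p kl := by
  unfold a2
  calc ∑ kl ∈ w.p.support, ((kl.1:ℝ) + kl.2) ^ 2 * w.p kl
      = ∑ kl ∈ w.p.support, ((kl.1:ℝ) ^ 2 * w.p kl + (kl.2:ℝ) ^ 2 * w.p kl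
          + 2 * ((kl.1:ℝ) * (kl.2:ℝ) * w.p kl)) := by
        refine Finset.sum_congr rfl fun kl _ => by ring
    _ = _ := by
        rw [Finset.sum_add_distrib, Finset.sum_add_distrib, sumA_swap w, ← Finset.mul_sum]
        ring

lemma angle_eq :
    InnerProductGeometry.angle (-(w.slope : ℂ) + Complex.I) (-(w.slope : ℂ) - Complex.I)
      = w.theta := by
  set r := w.slope with hrdef
  set A := ∑ kl ∈ w.p.support, (kl.1 : ℝ) ^ 2 * w.p kl with hA
  set B := ∑ kl ∈ w.p.support, (kl.1 : ℝ) * (kl.2 : ℝ) * w.p kl with hB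
  have hApos : 0 < A := sumA_pos w
  have hr2 : r ^ 2 = d2 w / a2 w := slope_sq w
  have hd2 : d2 w = 2 * A - 2 * B := d2_eq w
  have ha2 : a2 w = 2 * A + 2 * B := a2_eq w
  have ha2pos := a2_pos w
  rw [InnerProductGeometry.angle, QuadrantWalk.theta, ← hB, sumA_swap w, ← hA]
  norm_num [real_inner_eq_re_inner ℂ, Complex.mul_re]
  congr 1
  have habs1 : ‖-(r : ℂ) + Complex.I‖ = Real.sqrt (r ^ 2 + 1) := by
    rw [Complex.norm_def, Complex.normSq_apply]
    simp
    ring_nf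
  have habs2 : ‖-(r : ℂ) - Complex.I‖ = Real.sqrt (r ^ 2 + 1) := by
    rw [Complex.norm_def, Complex.normSq_apply]
    simp
    ring_nf
  have hr2' : r ^ 2 = (2 * A - 2 * B) / (2 * A + 2 * B) := by rw [hr2, hd2, ha2]
  have hden : 2 * A + 2 * B ≠ 0 := by rw [← ha2]; exact ne_of_gt ha2pos
  rw [habs1, habs2, Real.mul_self_sqrt (by positivity), Real.mul_self_sqrt (le_of_lt hApos),
    show r * r - 1 = r ^ 2 - 1 from by ring, hr2']
  rw [div_sub_one hden, div_add_one hden, div_div_div_cancel_right₀ hden,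
    div_eq_div_iff (by intro h; linarith) (ne_of_gt hApos)]
  ring
lemma div_abs_eq (A : ℂ) (lam : ℝ) (h : lam ≠ 0) :
    (A / (lam : ℂ)) / (((‖A‖ / lam : ℝ) : ℂ)) = A / ((‖A‖ : ℝ) : ℂ) := by
  by_cases hA : A = 0
  · simp [hA]
  · have h1 : ‖A‖ ≠ 0 := norm_ne_zero_iff.2 hA
    have hl : (lam : ℂ) ≠ 0 := by exact_mod_cast h
    push_cast
    field_simp

end SW
/-- right differentiability of `η` at `s = 1` along the unit circle, with
right derivative `i·√(Σ p_{k,ℓ}(k-ℓ)²/Σ p_{k,ℓ}(k+ℓ)²)`; consequently the curve `S₁`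
has a corner at `1`: the parametrization `λ ↦ η(e^{iλ})e^{iλ}` admits one-sided
tangent rays at `1` in the directions `u = -slope + i` (from above) and
`v = -slope - i` (from below), and the angle between `u` and `v` (the interior angle
of `S₁` at `1`) equals `θ`.  Here `η(s)` is the distinguished root of
`K(ηs, ηs⁻¹) = 0` in the closed unit disk: the root besides the identically-zero one
when `p_{1,1} = 0`, and the positive root when `p_{1,1} ≠ 0`. -/
theorem statement5 (w : QuadrantWalk) (η : ℂ → ℝ)
    (hη0 : w.p (1, 1) = 0 → ∀ s : ℂ, ‖s‖ = 1 →
      η s ∈ Set.Icc (-1 : ℝ) 1 ∧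
      (∀ z : ℂ, ‖z‖ ≤ 1 →
        (w.K (z * s) (z * s⁻¹) = 0 ↔ z = 0 ∨ z = (η s : ℂ))))
    (hη1 : w.p (1, 1) ≠ 0 → ∀ s : ℂ, ‖s‖ = 1 →
      0 < η s ∧ η s ≤ 1 ∧ w.K ((η s : ℂ) * s) ((η s : ℂ) * s⁻¹) = 0 ∧
      (∀ z : ℝ, 0 < z → z ≤ 1 →
        w.K ((z : ℂ) * s) ((z : ℂ) * s⁻¹) = 0 → z = η s))
    (hη_one : η 1 = 1) :
    Tendsto (fun lam : ℝ =>
        ((η (Complex.exp (Complex.I * lam)) : ℂ) - 1) / (Complex.exp (Complex.I * lam) - 1))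
      (nhdsWithin 0 (Set.Ioi 0)) (𝓝 (Complex.I * (w.slope : ℂ))) ∧
    Tendsto (fun lam : ℝ =>
        ((η (Complex.exp (Complex.I * lam)) : ℂ) * Complex.exp (Complex.I * lam) - 1) /
          ((‖(η (Complex.exp (Complex.I * lam)) : ℂ) *
            Complex.exp (Complex.I * lam) - 1‖ : ℝ) : ℂ))
      (nhdsWithin 0 (Set.Ioi 0))
      (𝓝 ((-(w.slope : ℂ) + Complex.I) /
        ((‖-(w.slope : ℂ) + Complex.I‖ : ℝ) : ℂ))) ∧
    Tendsto (fun lam : ℝ =>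
        ((η (Complex.exp (Complex.I * lam)) : ℂ) * Complex.exp (Complex.I * lam) - 1) /
          ((‖(η (Complex.exp (Complex.I * lam)) : ℂ) *
            Complex.exp (Complex.I * lam) - 1‖ : ℝ) : ℂ))
      (nhdsWithin 0 (Set.Iio 0))
      (𝓝 ((-(w.slope : ℂ) - Complex.I) /
        ((‖-(w.slope : ℂ) - Complex.I‖ : ℝ) : ℂ))) ∧
    InnerProductGeometry.angle (-(w.slope : ℂ) + Complex.I) (-(w.slope : ℂ) - Complex.I)
      = w.theta := by
  have hmain := SW.main w η hη0 hη1
  have hrpos := SW.slope_pos w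
  have hIoi : 𝓝[>] (0:ℝ) ≤ 𝓝[≠] (0:ℝ) := nhdsWithin_mono _ fun x hx => ne_of_gt hx
  have hIio : 𝓝[<] (0:ℝ) ≤ 𝓝[≠] (0:ℝ) := nhdsWithin_mono _ fun x hx => ne_of_lt hx
  have hexp := SW.tendsto_exp_slope
  set r := w.slope with hrdef
  -- real one-sided limits of the slope of η
  have hR : Tendsto (fun lam : ℝ => (η (Complex.exp (Complex.I * lam)) - 1) / lam)
      (𝓝[>] (0:ℝ)) (𝓝 (-r)) := by
    have h := (hmain.mono_left hIoi).neg
    refine Filter.Tendsto.congr' ?_ h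
    filter_upwards [self_mem_nhdsWithin] with lam hlam
    rw [abs_of_pos hlam]
    ring
  have hL : Tendsto (fun lam : ℝ => (η (Complex.exp (Complex.I * lam)) - 1) / lam)
      (𝓝[<] (0:ℝ)) (𝓝 r) := by
    have h := hmain.mono_left hIio
    refine Filter.Tendsto.congr' ?_ h
    filter_upwards [self_mem_nhdsWithin] with lam hlam
    rw [abs_of_neg hlam, div_neg, ← neg_div]
    congr 1
    ring
  -- η tends to 1
  have h1g : Tendsto (fun lam : ℝ => η (Complex.exp (Complex.I * lam))) (𝓝[≠] (0:ℝ)) (𝓝 1) := by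
    have habs0 : Tendsto (fun lam : ℝ => |lam|) (𝓝[≠] (0:ℝ)) (𝓝 0) := by
      simpa using (_root_.continuous_abs.tendsto (0:ℝ)).mono_left nhdsWithin_le_nhds
    have h := hmain.mul habs0
    rw [mul_zero] at h
    have h' : Tendsto (fun lam : ℝ => 1 - η (Complex.exp (Complex.I * lam)))
        (𝓝[≠] (0:ℝ)) (𝓝 0) := by
      refine Filter.Tendsto.congr' ?_ h
      filter_upwards [self_mem_nhdsWithin] with lam hlam
      rw [div_mul_cancel₀]
      exact abs_ne_zero.2 hlam
    have := (tendsto_const_nhds (x := (1:ℝ)) (f := 𝓝[≠] (0:ℝ))).sub h'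
    simpa using this
  have hgc : Tendsto (fun lam : ℝ => ((η (Complex.exp (Complex.I * lam)) : ℝ) : ℂ))
      (𝓝[≠] (0:ℝ)) (𝓝 1) := by
    have := (Complex.continuous_ofReal.tendsto 1).comp h1g
    simpa [Function.comp_def] using this
  -- numerator cast limits
  have hnumR : Tendsto (fun lam : ℝ =>
      (((η (Complex.exp (Complex.I * lam)) - 1) / lam : ℝ) : ℂ)) (𝓝[>] (0:ℝ))
      (𝓝 ((-r : ℝ) : ℂ)) := (Complex.continuous_ofReal.tendsto _).comp hR
  have hnumL : Tendsto (fun lam : ℝ =>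
      (((η (Complex.exp (Complex.I * lam)) - 1) / lam : ℝ) : ℂ)) (𝓝[<] (0:ℝ))
      (𝓝 ((r : ℝ) : ℂ)) := (Complex.continuous_ofReal.tendsto _).comp hL
  -- conclusion 1
  have hC1 : Tendsto (fun lam : ℝ =>
      ((η (Complex.exp (Complex.I * lam)) : ℂ) - 1) / (Complex.exp (Complex.I * lam) - 1))
      (𝓝[>] (0:ℝ)) (𝓝 (Complex.I * (r : ℂ))) := by
    have hinv : Tendsto (fun lam : ℝ => (lam : ℂ) / (Complex.exp (Complex.I * lam) - 1))
        (𝓝[>] (0:ℝ)) (𝓝 (Complex.I)⁻¹) := by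
      have := (hexp.mono_left hIoi).inv₀ Complex.I_ne_zero
      refine this.congr fun lam => ?_
      rw [inv_div]
    have hprod := hnumR.mul hinv
    have hval : ((-r : ℝ) : ℂ) * (Complex.I)⁻¹ = Complex.I * (r : ℂ) := by
      rw [Complex.inv_I]
      push_cast
      ring
    rw [hval] at hprod
    refine Filter.Tendsto.congr' ?_ hprod
    filter_upwards [self_mem_nhdsWithin] with lam hlam
    have hlne : (lam : ℂ) ≠ 0 := by exact_mod_cast ne_of_gt hlam
    push_cast
    by_cases he : Complex.exp (Complex.I * lam) - 1 = 0
    · rw [he]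
      simp
    · field_simp
      try ring
  -- the curve parametrization slopes
  have hhu : Tendsto (fun lam : ℝ =>
      ((η (Complex.exp (Complex.I * lam)) : ℂ) * Complex.exp (Complex.I * lam) - 1) / (lam : ℂ))
      (𝓝[>] (0:ℝ)) (𝓝 (-(r : ℂ) + Complex.I)) := by
    have hterm2 := (hgc.mono_left hIoi).mul (hexp.mono_left hIoi)
    have hsum := hnumR.add hterm2
    have hval : ((-r : ℝ) : ℂ) + 1 * Complex.I = -(r : ℂ) + Complex.I := by
      push_cast
      ring
    rw [hval] at hsum
    refine Filter.Tendsto.congr' ?_ hsum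
    filter_upwards [self_mem_nhdsWithin] with lam hlam
    have hlne : (lam : ℂ) ≠ 0 := by exact_mod_cast ne_of_gt hlam
    push_cast
    field_simp
    ring
  have hhv : Tendsto (fun lam : ℝ =>
      ((η (Complex.exp (Complex.I * lam)) : ℂ) * Complex.exp (Complex.I * lam) - 1) / (lam : ℂ))
      (𝓝[<] (0:ℝ)) (𝓝 ((r : ℂ) + Complex.I)) := by
    have hterm2 := (hgc.mono_left hIio).mul (hexp.mono_left hIio)
    have hsum := hnumL.add hterm2
    have hval : ((r : ℝ) : ℂ) + 1 * Complex.I = (r : ℂ) + Complex.I := by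
      push_cast
      ring
    rw [hval] at hsum
    refine Filter.Tendsto.congr' ?_ hsum
    filter_upwards [self_mem_nhdsWithin] with lam hlam
    have hlne : (lam : ℂ) ≠ 0 := by exact_mod_cast ne_of_lt hlam
    push_cast
    field_simp
    ring
  have hu_ne : (-(r : ℂ) + Complex.I) ≠ 0 := by
    intro h
    have := congrArg Complex.im h
    simp at this
  have hv_ne : ((r : ℂ) + Complex.I) ≠ 0 := by
    intro h
    have := congrArg Complex.im h
    simp at this
  -- conclusion 2
  have hC2 : Tendsto (fun lam : ℝ =>
      ((η (Complex.exp (Complex.I * lam)) : ℂ) * Complex.exp (Complex.I * lam) - 1) /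
        ((‖(η (Complex.exp (Complex.I * lam)) : ℂ) *
          Complex.exp (Complex.I * lam) - 1‖ : ℝ) : ℂ))
      (𝓝[>] (0:ℝ))
      (𝓝 ((-(r : ℂ) + Complex.I) / ((‖-(r : ℂ) + Complex.I‖ : ℝ) : ℂ))) := by
    have habsu : Tendsto (fun lam : ℝ =>
        ((‖(η (Complex.exp (Complex.I * lam)) : ℂ) *
          Complex.exp (Complex.I * lam) - 1‖ / lam : ℝ) : ℂ)) (𝓝[>] (0:ℝ))
        (𝓝 ((‖-(r : ℂ) + Complex.I‖ : ℝ) : ℂ)) := by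
      have h1 := (continuous_norm.tendsto _).comp hhu
      have h2 : Tendsto (fun lam : ℝ =>
          ‖(η (Complex.exp (Complex.I * lam)) : ℂ) *
            Complex.exp (Complex.I * lam) - 1‖ / lam) (𝓝[>] (0:ℝ))
          (𝓝 (‖-(r : ℂ) + Complex.I‖)) := by
        refine Filter.Tendsto.congr' ?_ h1
        filter_upwards [self_mem_nhdsWithin] with lam hlam
        simp only [Function.comp_apply]
        rw [norm_div, Complex.norm_real, Real.norm_eq_abs, abs_of_pos hlam]
      exact (Complex.continuous_ofReal.tendsto _).comp h2
    have hne2 : ((‖-(r : ℂ) + Complex.I‖ : ℝ) : ℂ) ≠ 0 := by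
      simpa using hu_ne
    have hdiv := hhu.div habsu hne2
    refine Filter.Tendsto.congr' ?_ hdiv
    filter_upwards [self_mem_nhdsWithin] with lam hlam
    exact SW.div_abs_eq _ lam (ne_of_gt hlam)
  -- conclusion 3
  have hC3 : Tendsto (fun lam : ℝ =>
      ((η (Complex.exp (Complex.I * lam)) : ℂ) * Complex.exp (Complex.I * lam) - 1) /
        ((‖(η (Complex.exp (Complex.I * lam)) : ℂ) *
          Complex.exp (Complex.I * lam) - 1‖ : ℝ) : ℂ))
      (𝓝[<] (0:ℝ))
      (𝓝 ((-(r : ℂ) - Complex.I) / ((‖-(r : ℂ) - Complex.I‖ : ℝ) : ℂ))) := by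
    have habsv : Tendsto (fun lam : ℝ =>
        ((‖(η (Complex.exp (Complex.I * lam)) : ℂ) *
          Complex.exp (Complex.I * lam) - 1‖ / lam : ℝ) : ℂ)) (𝓝[<] (0:ℝ))
        (𝓝 ((-(‖(r : ℂ) + Complex.I‖) : ℝ) : ℂ)) := by
      have h1 := ((continuous_norm.tendsto _).comp hhv).neg
      have h2 : Tendsto (fun lam : ℝ =>
          ‖(η (Complex.exp (Complex.I * lam)) : ℂ) *
            Complex.exp (Complex.I * lam) - 1‖ / lam) (𝓝[<] (0:ℝ))
          (𝓝 (-(‖(r : ℂ) + Complex.I‖))) := by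
        refine Filter.Tendsto.congr' ?_ h1
        filter_upwards [self_mem_nhdsWithin] with lam hlam
        simp only [Function.comp_apply, Pi.neg_apply]
        rw [norm_div, Complex.norm_real, Real.norm_eq_abs, abs_of_neg hlam]
        rw [div_neg, neg_neg]
      exact (Complex.continuous_ofReal.tendsto _).comp h2
    have hne3 : ((-(‖(r : ℂ) + Complex.I‖) : ℝ) : ℂ) ≠ 0 := by
      simpa using hv_ne
    have hdiv := hhv.div habsv hne3
    have hval : ((r : ℂ) + Complex.I) / ((-(‖(r : ℂ) + Complex.I‖) : ℝ) : ℂ)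
        = (-(r : ℂ) - Complex.I) / ((‖-(r : ℂ) - Complex.I‖ : ℝ) : ℂ) := by
      have h1 : (-(r : ℂ) - Complex.I) = -((r : ℂ) + Complex.I) := by ring
      rw [h1, norm_neg, Complex.ofReal_neg, div_neg, neg_div]
    rw [hval] at hdiv
    refine Filter.Tendsto.congr' ?_ hdiv
    filter_upwards [self_mem_nhdsWithin] with lam hlam
    exact SW.div_abs_eq _ lam (ne_of_lt hlam)
  exact ⟨hC1, hC2, hC3, SW.angle_eq w⟩
end
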